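/- arXiv:2208.11528 — 2 statements merged into one kernel-verified Lean document; each statement's English description precedes it below -/
import Mathlib

section
/- Let f be an excursion and ε > 0. Then: d_T[f](t,1) = f(t) − Jf(t) for all t ∈ [0,1]; the function f − Jf is a continuous excursion; Jf and J^ε f are PJG excursions; Δ_t(Jf) = Δ_t(f) and Δ_t(J^ε f) = Δ_t(f)·1_{Δ_t(f) ≥ ε} for all t, so in particular every nonzero jump of J^ε f has height at least ε. Moreover x_s^t(Jf) = x_s^t(f) for all s,t ∈ [0,1]. -/
open Set Filter Topology
open scoped Classical

noncomputable section

/-- Left limit of `f` at `t`, with the convention `f(0−) = 0`. -/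
def lm (f : ℝ → ℝ) (t : ℝ) : ℝ := if t = 0 then 0 else Function.leftLim f t

/-- The jump `Δ_t(f) = f t − f(t−)`. -/
def jump (f : ℝ → ℝ) (t : ℝ) : ℝ := f t - lm f t

/-- `inf_{[s,t]} f`. -/
def infIcc (f : ℝ → ℝ) (s t : ℝ) : ℝ := sInf (f '' Icc s t)

/-- An excursion: a càdlàg function on `[0,1]`, nonnegative, vanishing at `1` (and
extended by `0` outside `[0,1]`), all of whose jumps are nonnegative. -/
structure IsExcursion (f : ℝ → ℝ) : Prop where
  nonneg : ∀ t ∈ Icc (0:ℝ) 1, 0 ≤ f t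
  zero_outside : ∀ t, t ∉ Icc (0:ℝ) 1 → f t = 0
  rightCont : ∀ t ∈ Ico (0:ℝ) 1, Tendsto f (𝓝[>] t) (𝓝 (f t))
  leftLimEx : ∀ t ∈ Ioc (0:ℝ) 1, Tendsto f (𝓝[<] t) (𝓝 (Function.leftLim f t))
  one : f 1 = 0
  jump_nonneg : ∀ t ∈ Icc (0:ℝ) 1, 0 ≤ jump f t

/-- The genealogical relation `s ⪯_f t` : `s ≤ t` and `f(s−) ≤ inf_{[s,t]} f`. -/
def pre (f : ℝ → ℝ) (s t : ℝ) : Prop := s ≤ t ∧ lm f s ≤ infIcc f s t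

/-- `x_s^t(f) = 1_{s ≤ t} · max(inf_{[s,t]} f − f(s−), 0)`. -/
def xst (f : ℝ → ℝ) (s t : ℝ) : ℝ := if s ≤ t then max (infIcc f s t - lm f s) 0 else 0

/-- The most recent common ancestor `s ∧_f t`. -/
def mrca (f : ℝ → ℝ) (s t : ℝ) : ℝ := sSup {r : ℝ | 0 ≤ r ∧ pre f r s ∧ pre f r t}

/-- `δ_t(a,b) = min(|a−b|, Δ_t(f) − |a−b|)`, the circle pseudo-distance on `[0, Δ_t(f)]`. -/
def cdel (f : ℝ → ℝ) (t a b : ℝ) : ℝ := min |a - b| (jump f t - |a - b|)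

/-- `d_O(s,t) = ∑_{s ≺_f r ⪯_f t} δ_r(0, x_r^t)`. -/
def dO (f : ℝ → ℝ) (s t : ℝ) : ℝ :=
  ∑' r : ℝ, if pre f s r ∧ s < r ∧ pre f r t then cdel f r 0 (xst f r t) else 0

/-- `d_T(s,t) = f t − inf_{[s,t]} f − ∑_{s ≺_f r ⪯_f t} x_r^t`, intended for `s ⪯_f t`. -/
def dTanc (f : ℝ → ℝ) (s t : ℝ) : ℝ :=
  f t - infIcc f s t - ∑' r : ℝ, if pre f s r ∧ s < r ∧ pre f r t then xst f r t else 0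

/-- The looptree pseudo-distance `d_L[f]`. -/
def dL (f : ℝ → ℝ) (s t : ℝ) : ℝ :=
  cdel f (mrca f s t) (xst f (mrca f s t) s) (xst f (mrca f s t) t)
    + dO f (mrca f s t) s + dO f (mrca f s t) t

/-- The tree pseudo-distance `d_T[f]`. -/
def dT (f : ℝ → ℝ) (s t : ℝ) : ℝ := dTanc f (mrca f s t) s + dTanc f (mrca f s t) t

/-- The vernation pseudo-distance `d_V[f] = d_T[f] + 2·d_L[f]`. -/
def dV (f : ℝ → ℝ) (s t : ℝ) : ℝ := dT f s t + 2 * dL f s t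

/-- `Jf(t) = ∑_{r ⪯_f t} x_r^t(f)`. -/
def Jop (f : ℝ → ℝ) (t : ℝ) : ℝ := ∑' r : ℝ, if pre f r t then xst f r t else 0

/-- `J^ε f(t) = ∑_{r ⪯_f t, Δ_r(f) ≥ ε} x_r^t(f)`. -/
def Jeps (f : ℝ → ℝ) (ε : ℝ) (t : ℝ) : ℝ :=
  ∑' r : ℝ, if pre f r t ∧ ε ≤ jump f r then xst f r t else 0

/-- Pure jump growth (PJG) excursion: `f(t) = ∑_{r ⪯_f t} x_r^t(f)` on `[0,1]`. -/
def IsPJG (f : ℝ → ℝ) : Prop := ∀ t ∈ Icc (0:ℝ) 1, f t = Jop f t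

/-- An increasing bijection from `[0,1]` onto itself. -/
def IncBij (l : ℝ → ℝ) : Prop :=
  StrictMonoOn l (Icc (0:ℝ) 1) ∧ Set.BijOn l (Icc (0:ℝ) 1) (Icc (0:ℝ) 1)

/-- The Skorokhod distance `ρ` on functions `[0,1] → ℝ`. -/
def skor (f g : ℝ → ℝ) : ℝ :=
  sInf {c : ℝ | 0 ≤ c ∧ ∃ l : ℝ → ℝ, IncBij l ∧
    ∀ x ∈ Icc (0:ℝ) 1, |l x - x| ≤ c ∧ |f x - g (l x)| ≤ c}

namespace Exc
variable {f : ℝ → ℝ}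

theorem f_nn (hf : IsExcursion f) : ∀ x, 0 ≤ f x := by
  intro x
  by_cases h : x ∈ Icc (0:ℝ) 1
  · exact hf.nonneg x h
  · rw [hf.zero_outside x h]

theorem tendsto_lm (hf : IsExcursion f) (x : ℝ) :
    Tendsto f (𝓝[<] x) (𝓝 (lm f x)) := by
  rcases lt_trichotomy x 0 with h | h | h
  · have hz : Tendsto f (𝓝[<] x) (𝓝 0) := by
      apply Tendsto.congr' _ tendsto_const_nhds
      filter_upwards [self_mem_nhdsWithin] with u hu
      exact (hf.zero_outside u (by simp only [mem_Icc]; intro hc; linarith [hu.out, hc.1])).symm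
    have : lm f x = 0 := by
      rw [lm, if_neg h.ne]
      exact leftLim_eq_of_tendsto hz
    rw [this]; exact hz
  · subst h
    rw [lm, if_pos rfl]
    apply Tendsto.congr' _ tendsto_const_nhds
    filter_upwards [self_mem_nhdsWithin] with u hu
    exact (hf.zero_outside u (by simp only [mem_Icc]; intro hc; linarith [hu.out, hc.1])).symm
  · rcases le_or_gt x 1 with h1 | h1
    · rw [lm, if_neg h.ne']
      exact hf.leftLimEx x ⟨h, h1⟩
    · have hz : Tendsto f (𝓝[<] x) (𝓝 0) := by
        apply Tendsto.congr' _ tendsto_const_nhds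
        have hmem : Ioo (1:ℝ) x ∈ 𝓝[<] x := Ioo_mem_nhdsLT_of_mem ⟨h1, le_refl x⟩
        filter_upwards [hmem] with u hu
        exact (hf.zero_outside u (by simp only [mem_Icc]; intro hc; linarith [hu.1, hc.2])).symm
      have : lm f x = 0 := by
        rw [lm, if_neg h.ne']
        exact leftLim_eq_of_tendsto hz
      rw [this]; exact hz

theorem lm_nn (hf : IsExcursion f) (x : ℝ) : 0 ≤ lm f x :=
  ge_of_tendsto (tendsto_lm hf x) (Eventually.of_forall fun u => f_nn hf u)

theorem lm_le (hf : IsExcursion f) (x : ℝ) : lm f x ≤ f x := by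
  by_cases h : x ∈ Icc (0:ℝ) 1
  · have := hf.jump_nonneg x h; rw [jump] at this; linarith
  · have hfx : f x = 0 := hf.zero_outside x h
    rw [hfx]
    simp only [mem_Icc, not_and_or, not_le] at h
    have hz0 : Tendsto f (𝓝[<] x) (𝓝 0) := by
      apply Tendsto.congr' _ tendsto_const_nhds
      rcases h with h | h
      · filter_upwards [self_mem_nhdsWithin] with u hu
        exact (hf.zero_outside u (by simp only [mem_Icc]; intro hc; linarith [hu.out, hc.1])).symm
      · have hmem : Ioo (1:ℝ) x ∈ 𝓝[<] x := Ioo_mem_nhdsLT_of_mem ⟨h, le_refl x⟩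
        filter_upwards [hmem] with u hu
        exact (hf.zero_outside u (by simp only [mem_Icc]; intro hc; linarith [hu.1, hc.2])).symm
    rw [tendsto_nhds_unique (tendsto_lm hf x) hz0]




theorem bdd_img (hf : IsExcursion f) (s t : ℝ) : BddBelow (f '' Icc s t) :=
  ⟨0, fun y ⟨u, _, hu⟩ => hu ▸ f_nn hf u⟩

theorem infIcc_nonneg (hf : IsExcursion f) (s t : ℝ) : 0 ≤ infIcc f s t :=
  Real.sInf_nonneg fun y ⟨u, _, hu⟩ => hu ▸ f_nn hf u

theorem infIcc_le (hf : IsExcursion f) {s u t : ℝ} (h1 : s ≤ u) (h2 : u ≤ t) :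
    infIcc f s t ≤ f u :=
  csInf_le (bdd_img hf s t) ⟨u, ⟨h1, h2⟩, rfl⟩

theorem le_infIcc (hf : IsExcursion f) {s t c : ℝ} (hst : s ≤ t) (h : ∀ u ∈ Icc s t, c ≤ f u) :
    c ≤ infIcc f s t :=
  le_csInf (Nonempty.image f (nonempty_Icc.2 hst)) fun y ⟨u, hu, h2⟩ => h2 ▸ h u hu

theorem infIcc_split (hf : IsExcursion f) {s u t : ℝ} (h1 : s ≤ u) (h2 : u ≤ t) :
    infIcc f s t = min (infIcc f s u) (infIcc f u t) := by
  rw [infIcc, ← Icc_union_Icc_eq_Icc h1 h2, image_union,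
    csInf_union (bdd_img hf s u) (Nonempty.image f (nonempty_Icc.2 h1))
      (bdd_img hf u t) (Nonempty.image f (nonempty_Icc.2 h2))]
  rfl

theorem infIcc_self (f : ℝ → ℝ) (t : ℝ) : infIcc f t t = f t := by
  rw [infIcc, Icc_self, image_singleton, csInf_singleton]

theorem infIcc_mono_t (hf : IsExcursion f) {s t t' : ℝ} (h1 : s ≤ t) (h2 : t ≤ t') :
    infIcc f s t' ≤ infIcc f s t := by
  rw [infIcc_split hf h1 h2]; exact min_le_left _ _

theorem infIcc_mono_s (hf : IsExcursion f) {s s' t : ℝ} (h1 : s ≤ s') (h2 : s' ≤ t) :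
    infIcc f s t ≤ infIcc f s' t := by
  rw [infIcc_split hf h1 h2]; exact min_le_right _ _

theorem infIcc_zero_of_ft (hf : IsExcursion f) {s t : ℝ} (h1 : s ≤ t) (h2 : f t = 0) :
    infIcc f s t = 0 :=
  le_antisymm (h2 ▸ infIcc_le hf h1 (le_refl t)) (infIcc_nonneg hf s t)

theorem exists_near_inf (hf : IsExcursion f) {s t : ℝ} (h : s ≤ t) {d : ℝ} (hd : 0 < d) :
    ∃ u ∈ Icc s t, f u < infIcc f s t + d := by
  obtain ⟨y, ⟨u, hu, rfl⟩, hy⟩ := exists_lt_of_csInf_lt (Nonempty.image f (nonempty_Icc.2 h))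
    (lt_add_of_pos_right _ hd : infIcc f s t < infIcc f s t + d)
  exact ⟨u, hu, hy⟩

/-- F3: the left limit at `r` dominates any infimum over an interval whose interior contains
points just to the left of `r`. -/
theorem inf_le_lm (hf : IsExcursion f) {s r t : ℝ} (h1 : s < r) (h2 : r ≤ t) :
    infIcc f s t ≤ lm f r := by
  apply ge_of_tendsto (tendsto_lm hf r)
  filter_upwards [Ioo_mem_nhdsLT_of_mem (⟨h1, le_refl r⟩ : r ∈ Ioc s r)] with u hu
  exact infIcc_le hf hu.1.le (hu.2.le.trans h2)



/-! ### The summand family -/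

/-- The canonical summand: `trm f Q t r` is the contribution of ancestor `r` to the
`Q`-restricted jump sum at `t`. -/
def trm (f : ℝ → ℝ) (Q : ℝ → Prop) (t r : ℝ) : ℝ :=
  if Q r ∧ r ≤ t then max (infIcc f r t - lm f r) 0 else 0

/-- `Q`-restricted jump sum. -/
def SJ (f : ℝ → ℝ) (Q : ℝ → Prop) (t : ℝ) : ℝ := ∑' r, trm f Q t r

/-- Left version of the sum (contributions of strict ancestors). -/
def SJL (f : ℝ → ℝ) (Q : ℝ → Prop) (t : ℝ) : ℝ :=
  ∑' r, if r < t then trm f Q t r else 0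

theorem trm_nonneg (f : ℝ → ℝ) (Q : ℝ → Prop) (t r : ℝ) : 0 ≤ trm f Q t r := by
  rw [trm]; split_ifs
  · exact le_max_right _ _
  · exact le_refl 0

theorem trmL_nonneg (f : ℝ → ℝ) (Q : ℝ → Prop) (t r : ℝ) :
    0 ≤ if r < t then trm f Q t r else 0 := by
  split_ifs
  · exact trm_nonneg f Q t r
  · exact le_refl 0

theorem trm_zero_of_gt (f : ℝ → ℝ) (Q : ℝ → Prop) {t r : ℝ} (h : t < r) :
    trm f Q t r = 0 := by
  rw [trm, if_neg]; rintro ⟨-, h2⟩; exact absurd h2 h.not_ge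

/-- The key identification: the `pre`-guarded summand equals `trm`. -/
theorem hterm_eq (hf : IsExcursion f) (Q : ℝ → Prop) (t r : ℝ) :
    (if pre f r t ∧ Q r then xst f r t else 0) = trm f Q t r := by
  rcases le_or_gt r t with hrt | hrt
  · rw [trm, xst, if_pos hrt]
    by_cases hq : Q r
    · by_cases hp : pre f r t
      · rw [if_pos ⟨hp, hq⟩, if_pos ⟨hq, hrt⟩]
      · rw [if_neg (fun hc => hp hc.1), if_pos ⟨hq, hrt⟩]
        have : infIcc f r t < lm f r := by
          by_contra hc
          exact hp ⟨hrt, not_lt.1 hc⟩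
        rw [max_eq_right (by linarith)]
    · rw [if_neg (fun hc => hq hc.2), if_neg (fun hc => hq hc.1)]
  · rw [trm_zero_of_gt f Q hrt, if_neg]
    rintro ⟨⟨h1, -⟩, -⟩; exact absurd h1 hrt.not_ge

theorem Jop_term_eq (hf : IsExcursion f) (t r : ℝ) :
    (if pre f r t then xst f r t else 0) = trm f (fun _ => True) t r := by
  rw [← hterm_eq hf (fun _ => True) t r]
  simp

/-! ### Arithmetic helper lemmas -/

theorem ar_fsb {L w v g : ℝ} :
    max (min L w - v) 0 + max (min g w - max L v) 0 ≤ max (w - v) 0 := by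
  simp only [max_def, min_def]
  split_ifs <;> linarith

theorem ar_diff {p l v w : ℝ} (hp : p ≤ w) :
    max (p - l) 0 - max (min p v - l) 0 ≤ max (min p w - max l v) 0 := by
  simp only [max_def, min_def]
  split_ifs <;> linarith

theorem ar_low {p l a q : ℝ} (hpa : p ≤ a) :
    max (p - l) 0 ≤ max (min p q - l) 0 + max (min p a - max l q) 0 := by
  simp only [max_def, min_def]
  split_ifs <;> linarith



/-! ### The finite tiling bound -/

theorem fsb (hf : IsExcursion f) (S : Finset ℝ) :
    ∀ w v t : ℝ, (∀ r ∈ S, r ≤ t) →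
      ∑ r ∈ S, max (min (infIcc f r t) w - max (lm f r) v) 0 ≤ max (w - v) 0 := by
  induction S using Finset.strongInduction with
  | _ S ih =>
    intro w v t hS
    rcases S.eq_empty_or_nonempty with rfl | hne
    · simp
    · set rs := S.max' hne with hrs
      have hmem : rs ∈ S := S.max'_mem hne
      rw [← Finset.sum_erase_add _ _ hmem]
      have hsub : S.erase rs ⊂ S := Finset.erase_ssubset hmem
      have hkey : ∀ r ∈ S.erase rs,
          max (min (infIcc f r t) w - max (lm f r) v) 0
            = max (min (infIcc f r t) (min (lm f rs) w) - max (lm f r) v) 0 := by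
        intro r hr
        have hlt : r < rs := lt_of_le_of_ne (S.le_max' r (Finset.mem_of_mem_erase hr))
          (Finset.ne_of_mem_erase hr)
        have hle : infIcc f r t ≤ lm f rs := inf_le_lm hf hlt (hS rs hmem)
        congr 1
        rw [min_comm (lm f rs) w, ← min_assoc,
          min_eq_left (le_trans (min_le_left _ _) hle)]
      rw [Finset.sum_congr rfl hkey]
      have h1 := ih (S.erase rs) hsub (min (lm f rs) w) v t
        (fun r hr => hS r (Finset.mem_of_mem_erase hr))
      calc _ ≤ max (min (lm f rs) w - v) 0
              + max (min (infIcc f rs t) w - max (lm f rs) v) 0 := by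
              exact add_le_add_left h1 _
        _ ≤ max (w - v) 0 := ar_fsb



/-! ### Summability and basic bounds -/

theorem trm_zero_of_ft (hf : IsExcursion f) {t : ℝ} (h : f t = 0) (Q : ℝ → Prop) (r : ℝ) :
    trm f Q t r = 0 := by
  rw [trm]
  split_ifs with hc
  · rw [infIcc_zero_of_ft hf hc.2 h, max_eq_right (by linarith [lm_nn hf r])]
  · rfl

theorem sum_trm_le (hf : IsExcursion f) (Q : ℝ → Prop) (S : Finset ℝ) (t : ℝ) :
    ∑ r ∈ S, trm f Q t r ≤ f t := by
  rw [← Finset.sum_filter_of_ne (p := (· ≤ t))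
    (fun r _ hne => by by_contra hc; exact hne (trm_zero_of_gt f Q (not_le.1 hc)))]
  have step : ∀ r ∈ S.filter (· ≤ t), trm f Q t r
      ≤ max (min (infIcc f r t) (f t) - max (lm f r) 0) 0 := by
    intro r hr
    have hrt : r ≤ t := (Finset.mem_filter.1 hr).2
    rw [min_eq_left (infIcc_le hf hrt (le_refl t)), max_eq_left (lm_nn hf r), trm]
    split_ifs with hc
    · exact le_refl _
    · exact le_max_right _ _
  calc ∑ r ∈ S.filter (· ≤ t), trm f Q t r
      ≤ ∑ r ∈ S.filter (· ≤ t), max (min (infIcc f r t) (f t) - max (lm f r) 0) 0 :=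
        Finset.sum_le_sum step
    _ ≤ max (f t - 0) 0 := fsb hf _ (f t) 0 t (fun r hr => (Finset.mem_filter.1 hr).2)
    _ = f t := by rw [sub_zero, max_eq_left (f_nn hf t)]

theorem summable_trm (hf : IsExcursion f) (Q : ℝ → Prop) (t : ℝ) :
    Summable (trm f Q t) :=
  summable_of_sum_le (fun r => trm_nonneg f Q t r) (fun S => sum_trm_le hf Q S t)

theorem summable_trmL (hf : IsExcursion f) (Q : ℝ → Prop) (t : ℝ) :
    Summable (fun r => if r < t then trm f Q t r else 0) :=
  (summable_trm hf Q t).of_nonneg_of_le (fun r => trmL_nonneg f Q t r)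
    (fun r => by split_ifs with h; exacts [le_refl _, trm_nonneg f Q t r])

theorem SJ_nonneg (hf : IsExcursion f) (Q : ℝ → Prop) (t : ℝ) : 0 ≤ SJ f Q t :=
  tsum_nonneg (fun r => trm_nonneg f Q t r)

theorem SJL_nonneg (hf : IsExcursion f) (Q : ℝ → Prop) (t : ℝ) : 0 ≤ SJL f Q t :=
  tsum_nonneg (fun r => trmL_nonneg f Q t r)

theorem SJ_le_f (hf : IsExcursion f) (Q : ℝ → Prop) (t : ℝ) : SJ f Q t ≤ f t :=
  Summable.tsum_le_of_sum_le (summable_trm hf Q t) (fun S => sum_trm_le hf Q S t)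

theorem SJ_zero_of_ft (hf : IsExcursion f) (Q : ℝ → Prop) {t : ℝ} (h : f t = 0) :
    SJ f Q t = 0 := by
  rw [SJ]
  rw [show (fun r => trm f Q t r) = fun _ => (0:ℝ) from funext (trm_zero_of_ft hf h Q)]
  exact tsum_zero

theorem SJL_zero_of_ft (hf : IsExcursion f) (Q : ℝ → Prop) {t : ℝ} (h : f t = 0) :
    SJL f Q t = 0 := by
  rw [SJL]
  rw [show (fun r => if r < t then trm f Q t r else 0) = fun _ => (0:ℝ) from
    funext (fun r => by rw [trm_zero_of_ft hf h Q]; simp)]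
  exact tsum_zero

/-- C5 : the jump decomposition at `t`. -/
theorem SJ_eq_SJL_add (hf : IsExcursion f) (Q : ℝ → Prop) {t : ℝ} (ht : t ∈ Icc (0:ℝ) 1) :
    SJ f Q t = SJL f Q t + (if Q t then jump f t else 0) := by
  have h1 := Summable.tsum_eq_add_tsum_ite (summable_trm hf Q t) t
  have h2 : trm f Q t t = if Q t then jump f t else 0 := by
    rw [trm]
    by_cases hq : Q t
    · rw [if_pos ⟨hq, le_refl t⟩, if_pos hq, infIcc_self, jump]
      exact max_eq_left (by have := hf.jump_nonneg t ht; rw [jump] at this; linarith)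
    · rw [if_neg (fun hc => hq hc.1), if_neg hq]
  have h3 : (fun r => if r = t then (0:ℝ) else trm f Q t r)
      = fun r => if r < t then trm f Q t r else 0 := by
    funext r
    rcases lt_trichotomy r t with h | h | h
    · rw [if_neg h.ne, if_pos h]
    · subst h; rw [if_pos rfl, if_neg (lt_irrefl r)]
    · rw [if_neg h.ne', if_neg (not_lt.2 h.le), trm_zero_of_gt f Q h]
  rw [SJ, h1, h2, h3, ← SJL, add_comm]



/-! ### Upper bounds near a point -/

theorem trm_mono_t (hf : IsExcursion f) (Q : ℝ → Prop) {r t t' : ℝ} (h1 : r ≤ t) (h2 : t ≤ t') :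
    trm f Q t' r ≤ trm f Q t r := by
  rw [trm, trm]
  by_cases hq : Q r
  · rw [if_pos ⟨hq, h1.trans h2⟩, if_pos ⟨hq, h1⟩]
    exact max_le_max (sub_le_sub_right (infIcc_mono_t hf h1 h2) _) (le_refl 0)
  · rw [if_neg (fun hc => hq hc.1), if_neg (fun hc => hq hc.1)]

/-- Upper bound for `SJ` to the right: `t ≤ s`. -/
theorem up_right (hf : IsExcursion f) (Q : ℝ → Prop) {t s : ℝ} (hts : t ≤ s) :
    SJ f Q s ≤ SJ f Q t + max (f s - infIcc f t s) 0 := by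
  apply Summable.tsum_le_of_sum_le (summable_trm hf Q s)
  intro S
  rw [← Finset.sum_filter_of_ne (p := (· ≤ s))
    (fun r _ hne => by by_contra hc; exact hne (trm_zero_of_gt f Q (not_le.1 hc)))]
  set S0 := S.filter (· ≤ s) with hS0
  rw [← Finset.sum_filter_add_sum_filter_not S0 (· ≤ t)]
  have hb1 : ∑ r ∈ S0.filter (· ≤ t), trm f Q s r ≤ SJ f Q t := by
    calc ∑ r ∈ S0.filter (· ≤ t), trm f Q s r
        ≤ ∑ r ∈ S0.filter (· ≤ t), trm f Q t r :=
          Finset.sum_le_sum (fun r hr => trm_mono_t hf Q (Finset.mem_filter.1 hr).2 hts)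
      _ ≤ SJ f Q t := Summable.sum_le_tsum _ (fun r _ => trm_nonneg f Q t r) (summable_trm hf Q t)
  have hb2 : ∑ r ∈ S0.filter (¬ · ≤ t), trm f Q s r ≤ max (f s - infIcc f t s) 0 := by
    have step : ∀ r ∈ S0.filter (¬ · ≤ t), trm f Q s r
        ≤ max (min (infIcc f r s) (f s) - max (lm f r) (infIcc f t s)) 0 := by
      intro r hr
      have hrs : r ≤ s := (Finset.mem_filter.1 (Finset.mem_filter.1 hr).1).2
      have htr : t < r := not_le.1 (Finset.mem_filter.1 hr).2
      rw [min_eq_left (infIcc_le hf hrs (le_refl s)),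
        max_eq_left (inf_le_lm hf htr hrs), trm]
      split_ifs with hc
      · exact le_refl _
      · exact le_max_right _ _
    calc ∑ r ∈ S0.filter (¬ · ≤ t), trm f Q s r
        ≤ ∑ r ∈ S0.filter (¬ · ≤ t), max (min (infIcc f r s) (f s)
            - max (lm f r) (infIcc f t s)) 0 := Finset.sum_le_sum step
      _ ≤ max (f s - infIcc f t s) 0 := fsb hf _ (f s) (infIcc f t s) s
          (fun r hr => (Finset.mem_filter.1 (Finset.mem_filter.1 hr).1).2)
  linarith

/-- Upper bound for `SJ` to the left: `s < t`. -/
theorem up_left (hf : IsExcursion f) (Q : ℝ → Prop) {s t : ℝ} (hst : s < t) :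
    SJ f Q s ≤ SJL f Q t + max (f s - infIcc f s t) 0 := by
  apply Summable.tsum_le_of_sum_le (summable_trm hf Q s)
  intro S
  rw [← Finset.sum_filter_of_ne (p := (· ≤ s))
    (fun r _ hne => by by_contra hc; exact hne (trm_zero_of_gt f Q (not_le.1 hc)))]
  set S0 := S.filter (· ≤ s) with hS0
  have step : ∀ r ∈ S0, trm f Q s r ≤ (if r < t then trm f Q t r else 0)
      + max (min (infIcc f r s) (f s) - max (lm f r) (infIcc f s t)) 0 := by
    intro r hr
    have hrs : r ≤ s := (Finset.mem_filter.1 hr).2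
    have hrt : r < t := lt_of_le_of_lt hrs hst
    rw [if_pos hrt, trm, trm]
    by_cases hq : Q r
    · rw [if_pos ⟨hq, hrs⟩, if_pos ⟨hq, hrt.le⟩]
      have hsplit : infIcc f r t = min (infIcc f r s) (infIcc f s t) :=
        infIcc_split hf hrs hst.le
      rw [hsplit]
      have := ar_diff (p := infIcc f r s) (l := lm f r) (v := infIcc f s t)
        (w := f s) (infIcc_le hf hrs (le_refl s))
      linarith
    · rw [if_neg (fun hc => hq hc.1), if_neg (fun hc => hq hc.1)]
      positivity
  calc ∑ r ∈ S0, trm f Q s r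
      ≤ ∑ r ∈ S0, ((if r < t then trm f Q t r else 0)
          + max (min (infIcc f r s) (f s) - max (lm f r) (infIcc f s t)) 0) :=
        Finset.sum_le_sum step
    _ = ∑ r ∈ S0, (if r < t then trm f Q t r else 0)
          + ∑ r ∈ S0, max (min (infIcc f r s) (f s) - max (lm f r) (infIcc f s t)) 0 :=
        Finset.sum_add_distrib
    _ ≤ SJL f Q t + max (f s - infIcc f s t) 0 := by
        apply add_le_add
        · exact Summable.sum_le_tsum _ (fun r _ => trmL_nonneg f Q t r) (summable_trmL hf Q t)
        · exact fsb hf _ (f s) (infIcc f s t) s (fun r hr => (Finset.mem_filter.1 hr).2)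



/-! ### Bounds on the infimum of `SJ` over an interval -/

/-- The inner upper bound: value of `SJ` at `u ∈ [s, ·]` against the left sum at `s`. -/
theorem val_upper (hf : IsExcursion f) (Q : ℝ → Prop) {s u : ℝ} (hsu : s ≤ u) (v0 : ℝ)
    (hv0 : v0 ≤ infIcc f s u) (hv0' : Q s → v0 ≤ lm f s) :
    SJ f Q u ≤ SJL f Q s + max (f u - v0) 0 := by
  apply Summable.tsum_le_of_sum_le (summable_trm hf Q u)
  intro S
  rw [← Finset.sum_filter_of_ne (p := (· ≤ u))
    (fun r _ hne => by by_contra hc; exact hne (trm_zero_of_gt f Q (not_le.1 hc)))]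
  set S0 := S.filter (· ≤ u) with hS0
  rw [← Finset.sum_filter_add_sum_filter_not S0 (· < s)]
  have hb1 : ∑ r ∈ S0.filter (· < s), trm f Q u r ≤ SJL f Q s := by
    calc ∑ r ∈ S0.filter (· < s), trm f Q u r
        ≤ ∑ r ∈ S0.filter (· < s), (if r < s then trm f Q s r else 0) := by
          apply Finset.sum_le_sum
          intro r hr
          have hrs : r < s := (Finset.mem_filter.1 hr).2
          rw [if_pos hrs]
          exact trm_mono_t hf Q hrs.le hsu
      _ ≤ SJL f Q s := Summable.sum_le_tsum _ (fun r _ => trmL_nonneg f Q s r) (summable_trmL hf Q s)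
  have hb2 : ∑ r ∈ S0.filter (¬ · < s), trm f Q u r ≤ max (f u - v0) 0 := by
    have step : ∀ r ∈ S0.filter (¬ · < s), trm f Q u r
        ≤ max (min (infIcc f r u) (f u) - max (lm f r) v0) 0 := by
      intro r hr
      have hru : r ≤ u := (Finset.mem_filter.1 (Finset.mem_filter.1 hr).1).2
      have hsr : s ≤ r := not_lt.1 (Finset.mem_filter.1 hr).2
      rw [trm]
      split_ifs with hc
      · have hvlm : v0 ≤ lm f r := by
          rcases eq_or_lt_of_le hsr with rfl | hsr'
          · exact hv0' hc.1
          · exact hv0.trans (inf_le_lm hf hsr' hru)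
        rw [min_eq_left (infIcc_le hf hru (le_refl u)), max_eq_left hvlm]
      · exact le_max_right _ _
    calc ∑ r ∈ S0.filter (¬ · < s), trm f Q u r
        ≤ ∑ r ∈ S0.filter (¬ · < s), max (min (infIcc f r u) (f u) - max (lm f r) v0) 0 :=
          Finset.sum_le_sum step
      _ ≤ max (f u - v0) 0 := fsb hf _ (f u) v0 u
          (fun r hr => (Finset.mem_filter.1 (Finset.mem_filter.1 hr).1).2)
  linarith

/-- The inner lower bound. -/
theorem val_lower (hf : IsExcursion f) (Q : ℝ → Prop) {s u : ℝ} (hsu : s ≤ u) (hQ : Q s)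
    (hanc : lm f s ≤ infIcc f s u) :
    SJL f Q s + (infIcc f s u - lm f s) ≤ SJ f Q u := by
  have key : SJL f Q s ≤ SJ f Q u - (infIcc f s u - lm f s) := by
    apply Summable.tsum_le_of_sum_le (summable_trmL hf Q s)
    intro S
    have hfil : ∑ r ∈ S, (if r < s then trm f Q s r else 0)
        = ∑ r ∈ S.filter (· < s), trm f Q s r := (Finset.sum_filter _ _).symm
    rw [hfil]
    set S1 := S.filter (· < s) with hS1
    have step : ∀ r ∈ S1, trm f Q s r ≤ trm f Q u r
        + max (min (infIcc f r s) (lm f s) - max (lm f r) (infIcc f s u)) 0 := by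
      intro r hr
      have hrs : r < s := (Finset.mem_filter.1 hr).2
      rw [trm, trm]
      by_cases hq : Q r
      · rw [if_pos ⟨hq, hrs.le⟩, if_pos ⟨hq, hrs.le.trans hsu⟩]
        have hsplit : infIcc f r u = min (infIcc f r s) (infIcc f s u) :=
          infIcc_split hf hrs.le hsu
        rw [hsplit]
        exact ar_low (inf_le_lm hf hrs (le_refl s))
      · rw [if_neg (fun hc => hq hc.1), if_neg (fun hc => hq hc.1)]
        positivity
    have hbox : ∑ r ∈ S1, max (min (infIcc f r s) (lm f s)
        - max (lm f r) (infIcc f s u)) 0 ≤ 0 := by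
      calc _ ≤ max (lm f s - infIcc f s u) 0 := fsb hf _ (lm f s) (infIcc f s u) s
            (fun r hr => (Finset.mem_filter.1 hr).2.le)
        _ = 0 := max_eq_right (by linarith)
    have hmain : ∑ r ∈ S1, trm f Q u r + trm f Q u s ≤ SJ f Q u := by
      have hns : s ∉ S1 := fun hc => absurd (Finset.mem_filter.1 hc).2 (lt_irrefl s)
      calc ∑ r ∈ S1, trm f Q u r + trm f Q u s = ∑ r ∈ insert s S1, trm f Q u r := by
            rw [Finset.sum_insert hns]; ring
        _ ≤ SJ f Q u := Summable.sum_le_tsum _ (fun r _ => trm_nonneg f Q u r) (summable_trm hf Q u)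
    have htrms : trm f Q u s = infIcc f s u - lm f s := by
      rw [trm, if_pos ⟨hQ, hsu⟩, max_eq_left (by linarith)]
    calc ∑ r ∈ S1, trm f Q s r
        ≤ ∑ r ∈ S1, trm f Q u r + ∑ r ∈ S1, max (min (infIcc f r s) (lm f s)
            - max (lm f r) (infIcc f s u)) 0 := by
          rw [← Finset.sum_add_distrib]; exact Finset.sum_le_sum step
      _ ≤ ∑ r ∈ S1, trm f Q u r := by linarith
      _ ≤ SJ f Q u - (infIcc f s u - lm f s) := by rw [← htrms]; linarith
  linarith

/-- C9 : upper bound on the interval infimum of `SJ`. -/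
theorem inf_upper (hf : IsExcursion f) (Q : ℝ → Prop) {s t : ℝ} (hst : s ≤ t) :
    infIcc (SJ f Q) s t ≤ SJL f Q s + (if Q s then max (infIcc f s t - lm f s) 0 else 0) := by
  apply le_of_forall_pos_le_add
  intro d hd
  obtain ⟨u, hu, hfu⟩ := exists_near_inf hf hst hd
  set v0 := if Q s then min (lm f s) (infIcc f s u) else infIcc f s u with hv0def
  have h1 : infIcc (SJ f Q) s t ≤ SJ f Q u :=
    csInf_le ⟨0, fun y ⟨w, _, hw⟩ => hw ▸ SJ_nonneg hf Q w⟩ ⟨u, hu, rfl⟩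
  have h2 : SJ f Q u ≤ SJL f Q s + max (f u - v0) 0 := by
    apply val_upper hf Q hu.1
    · rw [hv0def]; split_ifs
      · exact min_le_right _ _
      · exact le_refl _
    · intro hq; rw [hv0def, if_pos hq]; exact min_le_left _ _
  have h3 : max (f u - v0) 0 ≤ (if Q s then max (infIcc f s t - lm f s) 0 else 0) + d := by
    have hmono : infIcc f s t ≤ infIcc f s u := infIcc_mono_t hf hu.1 hu.2
    rw [hv0def]
    by_cases hq : Q s
    · rw [if_pos hq, if_pos hq]
      have hvge : min (lm f s) (infIcc f s t) ≤ min (lm f s) (infIcc f s u) :=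
        min_le_min (le_refl _) hmono
      have key : infIcc f s t - min (lm f s) (infIcc f s t)
          = max (infIcc f s t - lm f s) 0 := by
        rcases le_total (lm f s) (infIcc f s t) with h | h
        · rw [min_eq_left h, max_eq_left (by linarith)]
        · rw [min_eq_right h, max_eq_right (by linarith)]; ring
      apply max_le _ (by positivity)
      have := le_max_left (infIcc f s t - lm f s) (0:ℝ)
      linarith [min_le_min (le_refl (lm f s)) hmono]
    · rw [if_neg hq, if_neg hq, zero_add]
      exact max_le (by linarith) hd.le
  linarith

/-- C10 : lower bound on the interval infimum of `SJ` in the ancestor case. -/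
theorem inf_lower (hf : IsExcursion f) (Q : ℝ → Prop) {s t : ℝ} (hst : s ≤ t) (hQ : Q s)
    (hanc : lm f s ≤ infIcc f s t) :
    SJL f Q s + (infIcc f s t - lm f s) ≤ infIcc (SJ f Q) s t := by
  apply le_csInf (Nonempty.image _ (nonempty_Icc.2 hst))
  rintro y ⟨u, hu, rfl⟩
  have hmono : infIcc f s t ≤ infIcc f s u := infIcc_mono_t hf hu.1 hu.2
  have := val_lower hf Q hu.1 hQ (hanc.trans hmono)
  linarith



/-! ### One-sided limits of `SJ` -/

theorem max_shift {x y l e : ℝ} (he : 0 ≤ e) (h : x ≤ y + e) :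
    max (x - l) 0 ≤ max (y - l) 0 + e := by
  apply max_le _ (by positivity)
  have := le_max_left (y - l) (0:ℝ)
  linarith

/-- C7 : right continuity of `SJ` on `[0,1)`. -/
theorem SJ_rightCont (hf : IsExcursion f) (Q : ℝ → Prop) {t : ℝ} (ht : t ∈ Ico (0:ℝ) 1) :
    Tendsto (SJ f Q) (𝓝[>] t) (𝓝 (SJ f Q t)) := by
  rw [Metric.tendsto_nhds]
  intro ε hε
  obtain ⟨S, hS⟩ : ∃ S : Finset ℝ, SJ f Q t - ε / 4 < ∑ r ∈ S, trm f Q t r :=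
    ((summable_trm hf Q t).hasSum.eventually (eventually_gt_nhds
      (by have : SJ f Q t = ∑' r, trm f Q t r := rfl; linarith))).exists
  rw [← Finset.sum_filter_of_ne (p := (· ≤ t))
    (fun r _ hne => by by_contra hc; exact hne (trm_zero_of_gt f Q (not_le.1 hc)))] at hS
  set S1 := S.filter (· ≤ t) with hS1
  set N : ℝ := (S1.card : ℝ) with hN
  have hNnn : (0:ℝ) ≤ N := Nat.cast_nonneg _
  set e : ℝ := ε / (4 * (N + 1)) with he
  have hepos : 0 < e := by positivity
  obtain ⟨u0, hu0, hIoo⟩ := mem_nhdsGT_iff_exists_Ioo_subset.1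
    ((Metric.tendsto_nhds.1 (hf.rightCont t ht) e hepos))
  filter_upwards [Ioo_mem_nhdsGT_of_mem (⟨le_refl t, hu0⟩ : t ∈ Ico t u0)] with s hs
  have hfs : |f s - f t| < e := by
    have := hIoo hs; simp only [mem_setOf_eq, Real.dist_eq] at this; exact this
  have hinf : f t - e ≤ infIcc f t s := by
    apply le_infIcc hf hs.1.le
    intro u hu
    rcases eq_or_lt_of_le hu.1 with rfl | hut
    · linarith
    · have h5 := hIoo (⟨hut, lt_of_le_of_lt hu.2 hs.2⟩ : u ∈ Ioo t u0)
      simp only [mem_setOf_eq, Real.dist_eq] at h5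
      have := abs_lt.1 h5
      linarith [this.1]
  have hupper : SJ f Q s ≤ SJ f Q t + 2 * e := by
    have h1 := up_right hf Q hs.1.le
    have h2 : max (f s - infIcc f t s) 0 ≤ 2 * e := by
      apply max_le _ (by positivity)
      have := (abs_lt.1 hfs).2
      linarith
    linarith
  have hlower : SJ f Q t - ε / 2 < SJ f Q s := by
    have hterm : ∀ r ∈ S1, trm f Q t r ≤ trm f Q s r + e := by
      intro r hr
      have hrt : r ≤ t := (Finset.mem_filter.1 hr).2
      rw [trm, trm]
      by_cases hq : Q r
      · rw [if_pos ⟨hq, hrt⟩, if_pos ⟨hq, hrt.trans hs.1.le⟩]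
        have hsplit : infIcc f r s = min (infIcc f r t) (infIcc f t s) :=
          infIcc_split hf hrt hs.1.le
        have hle : infIcc f r t ≤ infIcc f r s + e := by
          rw [hsplit]
          rcases min_cases (infIcc f r t) (infIcc f t s) with ⟨hm, _⟩ | ⟨hm, hm2⟩
          · rw [hm]; linarith
          · rw [hm]
            have := infIcc_le hf hrt (le_refl t)
            linarith
        exact max_shift hepos.le hle
      · rw [if_neg (fun hc => hq hc.1), if_neg (fun hc => hq hc.1)]
        positivity
    have hsum : ∑ r ∈ S1, trm f Q t r ≤ ∑ r ∈ S1, trm f Q s r + N * e := by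
      calc ∑ r ∈ S1, trm f Q t r ≤ ∑ r ∈ S1, (trm f Q s r + e) := Finset.sum_le_sum hterm
        _ = ∑ r ∈ S1, trm f Q s r + N * e := by
            rw [Finset.sum_add_distrib, Finset.sum_const, nsmul_eq_mul, hN]
    have hsub : ∑ r ∈ S1, trm f Q s r ≤ SJ f Q s :=
      Summable.sum_le_tsum _ (fun r _ => trm_nonneg f Q s r) (summable_trm hf Q s)
    have hNe : N * e ≤ ε / 4 := by
      have h1 : (0:ℝ) < N + 1 := by linarith
      have h2 : (N + 1) * e = ε / 4 := by rw [he]; field_simp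
      nlinarith
    linarith
  have h2e : 2 * e ≤ ε / 2 := by
    have h1 : (0:ℝ) < N + 1 := by linarith
    have h2 : (N + 1) * e = ε / 4 := by rw [he]; field_simp
    nlinarith
  rw [Real.dist_eq, abs_lt]
  exact ⟨by linarith, by linarith⟩



/-- C6 : left limit of `SJ` on `(0,1]`. -/
theorem SJ_leftLim (hf : IsExcursion f) (Q : ℝ → Prop) {t : ℝ} (ht : t ∈ Ioc (0:ℝ) 1) :
    Tendsto (SJ f Q) (𝓝[<] t) (𝓝 (SJL f Q t)) := by
  rw [Metric.tendsto_nhds]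
  intro ε hε
  obtain ⟨S, hS⟩ : ∃ S : Finset ℝ,
      SJL f Q t - ε / 2 < ∑ r ∈ S, (if r < t then trm f Q t r else 0) :=
    ((summable_trmL hf Q t).hasSum.eventually (eventually_gt_nhds
      (by have : SJL f Q t = ∑' r, (if r < t then trm f Q t r else 0) := rfl; linarith))).exists
  rw [← Finset.sum_filter (· < t) (trm f Q t)] at hS
  set S2 := S.filter (· < t) with hS2
  obtain ⟨l0, hl0, hIoo⟩ := mem_nhdsLT_iff_exists_Ioo_subset.1
    ((Metric.tendsto_nhds.1 (tendsto_lm hf t) (ε / 8) (by linarith)))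
  set lo := (insert l0 S2).max' (Finset.insert_nonempty _ _) with hlo
  have hlot : lo < t := by
    rw [hlo, Finset.max'_lt_iff]
    intro y hy
    rcases Finset.mem_insert.1 hy with rfl | hy2
    · exact hl0
    · exact (Finset.mem_filter.1 hy2).2
  have hl0lo : l0 ≤ lo := Finset.le_max' _ _ (Finset.mem_insert_self _ _)
  filter_upwards [Ioo_mem_nhdsLT_of_mem (⟨hlot, le_refl t⟩ : t ∈ Ioc lo t)] with s hs
  have hsIoo : s ∈ Ioo l0 t := ⟨lt_of_le_of_lt hl0lo hs.1, hs.2⟩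
  have hfs : |f s - lm f t| < ε / 8 := by
    have := hIoo hsIoo; simp only [mem_setOf_eq, Real.dist_eq] at this; exact this
  have hinf : lm f t - ε / 8 ≤ infIcc f s t := by
    apply le_infIcc hf hs.2.le
    intro u hu
    rcases eq_or_lt_of_le hu.2 with rfl | hut
    · linarith [lm_le hf u]
    · have h5 := hIoo (⟨lt_of_lt_of_le hsIoo.1 hu.1, hut⟩ : u ∈ Ioo l0 t)
      simp only [mem_setOf_eq, Real.dist_eq] at h5
      have := abs_lt.1 h5
      linarith [this.1]
  have hupper : SJ f Q s ≤ SJL f Q t + ε / 4 := by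
    have h1 := up_left hf Q hs.2
    have h2 : max (f s - infIcc f s t) 0 ≤ ε / 4 := by
      apply max_le _ (by linarith)
      have := (abs_lt.1 hfs).2
      linarith
    linarith
  have hlower : SJL f Q t - ε / 2 < SJ f Q s := by
    have hterm : ∀ r ∈ S2, trm f Q t r ≤ trm f Q s r := by
      intro r hr
      have hrs : r ≤ s := le_of_lt (lt_of_le_of_lt
        (Finset.le_max' _ _ (Finset.mem_insert_of_mem hr)) hs.1)
      exact trm_mono_t hf Q hrs hs.2.le
    have hsub : ∑ r ∈ S2, trm f Q s r ≤ SJ f Q s :=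
      Summable.sum_le_tsum _ (fun r _ => trm_nonneg f Q s r) (summable_trm hf Q s)
    calc SJL f Q t - ε / 2 < ∑ r ∈ S2, trm f Q t r := hS
      _ ≤ ∑ r ∈ S2, trm f Q s r := Finset.sum_le_sum hterm
      _ ≤ SJ f Q s := hsub
  rw [Real.dist_eq, abs_lt]
  exact ⟨by linarith, by linarith⟩



/-! ### `SJ` is an excursion -/

theorem trm_zero_of_neg (hf : IsExcursion f) (Q : ℝ → Prop) {t r : ℝ} (hr : r < 0)
    (hrt : r ≤ t) : trm f Q t r = 0 := by
  rw [trm]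
  split_ifs with hc
  · have h1 : infIcc f r t ≤ 0 := by
      have := infIcc_le hf (le_refl r) hrt
      rw [hf.zero_outside r (by simp only [mem_Icc]; intro hc2; linarith [hc2.1])] at this
      exact this
    rw [max_eq_right (by linarith [lm_nn hf r])]
  · rfl

theorem SJL_zero (hf : IsExcursion f) (Q : ℝ → Prop) : SJL f Q 0 = 0 := by
  rw [SJL]
  rw [show (fun r => if r < (0:ℝ) then trm f Q 0 r else 0) = fun _ => (0:ℝ) from
    funext (fun r => by
      split_ifs with h
      · exact trm_zero_of_neg hf Q h h.le
      · rfl)]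
  exact tsum_zero

/-- C8 : the left limit value of `SJ`. -/
theorem lm_SJ (hf : IsExcursion f) (Q : ℝ → Prop) {t : ℝ} (ht : t ∈ Icc (0:ℝ) 1) :
    lm (SJ f Q) t = SJL f Q t := by
  rcases eq_or_lt_of_le ht.1 with rfl | htpos
  · rw [lm, if_pos rfl, SJL_zero hf Q]
  · rw [lm, if_neg htpos.ne']
    exact leftLim_eq_of_tendsto (SJ_leftLim hf Q ⟨htpos, ht.2⟩)

/-- The jump of `SJ`. -/
theorem jump_SJ (hf : IsExcursion f) (Q : ℝ → Prop) {t : ℝ} (ht : t ∈ Icc (0:ℝ) 1) :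
    jump (SJ f Q) t = if Q t then jump f t else 0 := by
  rw [jump, lm_SJ hf Q ht, SJ_eq_SJL_add hf Q ht]; ring

/-- `SJ f Q` is itself an excursion. -/
theorem exc_SJ (hf : IsExcursion f) (Q : ℝ → Prop) : IsExcursion (SJ f Q) where
  nonneg := fun t _ => SJ_nonneg hf Q t
  zero_outside := fun t h => SJ_zero_of_ft hf Q (hf.zero_outside t h)
  rightCont := fun t ht => SJ_rightCont hf Q ht
  leftLimEx := fun t ht => by
    have h := SJ_leftLim hf Q ht
    rw [leftLim_eq_of_tendsto h]
    exact h
  one := SJ_zero_of_ft hf Q hf.one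
  jump_nonneg := fun t ht => by
    rw [jump_SJ hf Q ht]
    split_ifs with h
    · exact hf.jump_nonneg t ht
    · exact le_refl 0

/-! ### `xst` of `SJ` -/

/-- C11 : the jump-increments of `SJ` agree with those of `f` (restricted by `Q`). -/
theorem xst_SJ (hf : IsExcursion f) (Q : ℝ → Prop) {s t : ℝ} (hs : s ∈ Icc (0:ℝ) 1)
    (ht : t ∈ Icc (0:ℝ) 1) : xst (SJ f Q) s t = if Q s then xst f s t else 0 := by
  rcases le_or_gt s t with hst | hst
  · rw [xst, xst, if_pos hst, if_pos hst, lm_SJ hf Q hs]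
    have hup := inf_upper hf Q hst
    by_cases hq : Q s
    · rw [if_pos hq] at hup ⊢
      rcases le_or_gt (lm f s) (infIcc f s t) with hanc | hanc
      · have hlow := inf_lower hf Q hst hq hanc
        rw [max_eq_left (by linarith)] at hup ⊢
        have h2 : infIcc (SJ f Q) s t - SJL f Q s = infIcc f s t - lm f s := by
          have := le_antisymm hup hlow; linarith
        rw [h2]
        simp only [max_eq_left (by linarith : (0:ℝ) ≤ infIcc f s t - lm f s)]
      · rw [max_eq_right (by linarith)] at hup ⊢
        rw [max_eq_right (by linarith)]
    · rw [if_neg hq] at hup ⊢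
      rw [max_eq_right (by linarith)]
  · rw [xst, xst, if_neg hst.not_ge, if_neg hst.not_ge]
    split_ifs <;> rfl



/-! ### `SJ` is pure jump growth -/

theorem pjg_SJ (hf : IsExcursion f) (Q : ℝ → Prop) {t : ℝ} (ht : t ∈ Icc (0:ℝ) 1) :
    Jop (SJ f Q) t = SJ f Q t := by
  have hG := exc_SJ hf Q
  rw [Jop, SJ]
  apply tsum_congr
  intro r
  rcases le_or_gt r t with hrt | hrt
  · rcases lt_or_ge r 0 with hr0 | hr0
    · have hx : xst (SJ f Q) r t = 0 := by
        rw [xst, if_pos hrt]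
        have h1 : infIcc (SJ f Q) r t ≤ 0 := by
          have := infIcc_le hG (le_refl r) hrt
          rw [hG.zero_outside r (by simp only [mem_Icc]; intro hc2; linarith [hc2.1])] at this
          exact this
        exact max_eq_right (by linarith [lm_nn hG r])
      rw [trm_zero_of_neg hf Q hr0 hrt]
      split_ifs <;> [exact hx; rfl]
    · have hrI : r ∈ Icc (0:ℝ) 1 := ⟨hr0, hrt.trans ht.2⟩
      have hxG := xst_SJ hf Q hrI ht
      by_cases hq : Q r
      · rcases lt_or_ge (lm f r) (infIcc f r t) with hanc | hanc
        · have hpre : pre (SJ f Q) r t := by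
            refine ⟨hrt, ?_⟩
            rw [lm_SJ hf Q hrI]
            have := inf_lower hf Q hrt hq hanc.le
            linarith
          rw [if_pos hpre, hxG, if_pos hq, trm, if_pos ⟨hq, hrt⟩, xst, if_pos hrt]
        · have hx0 : xst f r t = 0 := by
            rw [xst, if_pos hrt]
            exact max_eq_right (by linarith)
          have htrm : trm f Q t r = 0 := by
            rw [trm, if_pos ⟨hq, hrt⟩]
            exact max_eq_right (by linarith)
          rw [htrm]
          split_ifs with h
          · rw [hxG, if_pos hq, hx0]
          · rfl
      · rw [trm, if_neg (show ¬(Q r ∧ r ≤ t) from fun hc => hq hc.1)]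
        split_ifs with h
        · rw [hxG, if_neg hq]
        · rfl
  · rw [trm_zero_of_gt f Q hrt, if_neg (fun hc => absurd hc.1 hrt.not_ge)]

theorem Jop_eq_SJ (hf : IsExcursion f) : Jop f = SJ f (fun _ => True) :=
  funext fun t => tsum_congr fun r => Jop_term_eq hf t r

theorem Jeps_eq_SJ (hf : IsExcursion f) (e : ℝ) :
    Jeps f e = SJ f (fun r => e ≤ jump f r) :=
  funext fun t => tsum_congr fun r => hterm_eq hf (fun r => e ≤ jump f r) t r



/-! ### The most recent common ancestor with `1`, and the tree distance to the root -/

theorem pre_zero (hf : IsExcursion f) {t : ℝ} (ht : 0 ≤ t) : pre f 0 t :=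
  ⟨ht, by rw [lm, if_pos rfl]; exact infIcc_nonneg hf 0 t⟩

theorem dT_to_one (hf : IsExcursion f) {t : ℝ} (ht : t ∈ Icc (0:ℝ) 1) :
    dT f t 1 = f t - Jop f t := by
  set m := mrca f t 1 with hmdef
  set Sm := {r : ℝ | 0 ≤ r ∧ pre f r t ∧ pre f r 1} with hSmdef
  have hSm0 : (0:ℝ) ∈ Sm := ⟨le_refl 0, pre_zero hf ht.1, pre_zero hf (by norm_num)⟩
  have hSmbdd : BddAbove Sm := ⟨t, fun r hr => hr.2.1.1⟩
  have hm0 : 0 ≤ m := le_csSup hSmbdd hSm0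
  have hmt : m ≤ t := csSup_le ⟨0, hSm0⟩ (fun r hr => hr.2.1.1)
  have hm1 : m ≤ 1 := hmt.trans ht.2
  have hmem_le : ∀ r ∈ Sm, r ≤ m := fun r hr => le_csSup hSmbdd hr
  have hlm1_zero : ∀ r ∈ Sm, lm f r = 0 := by
    intro r hr
    have h1 : infIcc f r 1 = 0 := infIcc_zero_of_ft hf hr.2.2.1 hf.one
    have := hr.2.2.2
    rw [h1] at this
    exact le_antisymm this (lm_nn hf r)
  have hlm0 : lm f m = 0 := by
    rcases eq_or_lt_of_le hm0 with h0 | h0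
    · rw [lm, if_pos h0.symm]
    · refine le_antisymm ?_ (lm_nn hf m)
      by_contra hc
      push_neg at hc
      set e := lm f m with hedef
      obtain ⟨l0, hl0, hIoo⟩ := mem_nhdsLT_iff_exists_Ioo_subset.1
        ((Metric.tendsto_nhds.1 (tendsto_lm hf m) (e / 2) (by linarith)))
      obtain ⟨r, hrSm, hrgt⟩ := exists_lt_of_lt_csSup ⟨0, hSm0⟩
        (show max l0 (m / 2) < m from max_lt hl0 (by linarith))
      have hrm : r ≤ m := hmem_le r hrSm
      have hlmr : lm f r = 0 := hlm1_zero r hrSm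
      rcases eq_or_lt_of_le hrm with rfl | hrm'
      · rw [hlmr] at hedef; linarith
      · obtain ⟨l2, hl2, hIoo2⟩ := mem_nhdsLT_iff_exists_Ioo_subset.1
          ((Metric.tendsto_nhds.1 (tendsto_lm hf r) (e / 2) (by linarith)))
        rw [hlmr] at hIoo2
        obtain ⟨u, hu⟩ : (Ioo (max l2 (max l0 (m / 2))) r).Nonempty :=
          nonempty_Ioo.2 (max_lt hl2 hrgt)
        have hu1 := hIoo2 ⟨lt_of_le_of_lt (le_max_left _ _) hu.1, hu.2⟩
        have hu2 := hIoo ⟨lt_of_le_of_lt ((le_max_left l0 (m/2)).trans (le_max_right l2 _)) hu.1,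
          hu.2.trans hrm'⟩
        simp only [mem_setOf_eq, Real.dist_eq, sub_zero] at hu1 hu2
        rw [abs_of_nonneg (f_nn hf u)] at hu1
        have := (abs_lt.1 hu2).1
        linarith
  have hg0 : ∀ u, 0 ≤ u → u < m → infIcc f u t = 0 := by
    intro u hu0 hum
    refine le_antisymm ?_ (infIcc_nonneg hf u t)
    apply le_of_forall_pos_le_add
    intro e he
    obtain ⟨l0, hl0, hIoo⟩ := mem_nhdsLT_iff_exists_Ioo_subset.1
      ((Metric.tendsto_nhds.1 (tendsto_lm hf m) e he))
    obtain ⟨w, hw⟩ : (Ioo (max l0 u) m).Nonempty := nonempty_Ioo.2 (max_lt hl0 hum)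
    have hw1 := hIoo ⟨lt_of_le_of_lt (le_max_left _ _) hw.1, hw.2⟩
    simp only [mem_setOf_eq, Real.dist_eq, hlm0, sub_zero] at hw1
    rw [abs_of_nonneg (f_nn hf w)] at hw1
    have h2 : infIcc f u t ≤ f w :=
      infIcc_le hf (le_of_lt (lt_of_le_of_lt (le_max_right l0 u) hw.1)) (hw.2.le.trans hmt)
    linarith
  have hpremt : pre f m t := ⟨hmt, by rw [hlm0]; exact infIcc_nonneg hf m t⟩
  -- dTanc f m 1 = 0
  have hdm1 : dTanc f m 1 = 0 := by
    rw [dTanc, hf.one, infIcc_zero_of_ft hf hm1 hf.one]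
    rw [show (fun r => if pre f m r ∧ m < r ∧ pre f r 1 then xst f r 1 else 0)
        = fun _ => (0:ℝ) from funext (fun r => by
      split_ifs with hc
      · rw [xst, if_pos hc.2.2.1, infIcc_zero_of_ft hf hc.2.2.1 hf.one]
        exact max_eq_right (by linarith [lm_nn hf r])
      · rfl)]
    rw [tsum_zero]; ring
  -- splitting Jop at m
  have hsum : Summable (fun r => if pre f r t then xst f r t else 0) :=
    (summable_trm hf (fun _ => True) t).congr (fun r => (Jop_term_eq hf t r).symm)
  have hsplit : Jop f t = infIcc f m t
      + ∑' r, (if pre f m r ∧ m < r ∧ pre f r t then xst f r t else 0) := by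
    have h1 := Summable.tsum_eq_add_tsum_ite hsum m
    have h2 : (if pre f m t then xst f m t else 0) = infIcc f m t := by
      rw [if_pos hpremt, xst, if_pos hmt, hlm0, sub_zero]
      exact max_eq_left (infIcc_nonneg hf m t)
    have h3 : (fun r => if r = m then (0:ℝ) else if pre f r t then xst f r t else 0)
        = fun r => if pre f m r ∧ m < r ∧ pre f r t then xst f r t else 0 := by
      funext r
      by_cases hrm : r = m
      · subst hrm
        rw [if_pos rfl, if_neg (fun hc => lt_irrefl _ hc.2.1)]
      · rw [if_neg hrm]
        by_cases hpre : pre f r t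
        · rcases lt_or_ge m r with hmr | hmr
          · rw [if_pos hpre, if_pos ⟨⟨hmr.le, by rw [hlm0]; exact infIcc_nonneg hf m r⟩,
              hmr, hpre⟩]
          · have hrm' : r < m := lt_of_le_of_ne hmr hrm
            have hx0 : xst f r t = 0 := by
              rw [xst, if_pos hpre.1]
              rcases le_or_gt 0 r with hr0 | hr0
              · rw [hg0 r hr0 hrm']
                exact max_eq_right (by linarith [lm_nn hf r])
              · have h5 : infIcc f r t ≤ 0 := by
                  have h6 := infIcc_le hf (le_refl r) hpre.1
                  rwa [hf.zero_outside r (fun hc2 => absurd hc2.1 hr0.not_ge)] at h6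
                exact max_eq_right (by linarith [lm_nn hf r])
            rw [if_pos hpre, hx0, if_neg (show ¬(pre f m r ∧ m < r ∧ pre f r t) from
              fun hc => absurd hc.2.1 hrm'.asymm)]
        · rw [if_neg hpre, if_neg (fun hc => hpre hc.2.2)]
    rw [Jop, h1, h2, h3]
  rw [dT, ← hmdef, hdm1, dTanc, add_zero]
  linarith



/-! ### The continuous part `f - Jf` -/

theorem jump_sub_SJ (hf : IsExcursion f) {t : ℝ} (ht : t ∈ Icc (0:ℝ) 1) :
    jump (fun u => f u - SJ f (fun _ => True) u) t = 0 := by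
  set Q : ℝ → Prop := fun _ => True with hQ
  rcases eq_or_lt_of_le ht.1 with h0 | h0
  · rw [jump, lm, if_pos h0.symm, sub_zero, ← h0]
    have h1 := SJ_eq_SJL_add hf Q (by constructor <;> norm_num : (0:ℝ) ∈ Icc (0:ℝ) 1)
    rw [SJL_zero hf Q, if_pos trivial, jump, lm, if_pos rfl, sub_zero, zero_add] at h1
    rw [h1]; ring
  · have hTend : Tendsto (fun u => f u - SJ f Q u) (𝓝[<] t)
        (𝓝 (lm f t - SJL f Q t)) :=
      Tendsto.sub (tendsto_lm hf t) (SJ_leftLim hf Q ⟨h0, ht.2⟩)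
    have hlm : lm (fun u => f u - SJ f Q u) t = lm f t - SJL f Q t := by
      rw [lm, if_neg h0.ne']
      exact leftLim_eq_of_tendsto hTend
    rw [jump, hlm]
    have h1 := SJ_eq_SJL_add hf Q ht
    rw [if_pos trivial, jump] at h1
    rw [h1]; ring

theorem exc_sub_SJ (hf : IsExcursion f) :
    IsExcursion (fun u => f u - SJ f (fun _ => True) u) where
  nonneg := fun t _ => by
    have h1 := SJ_le_f hf (fun _ => True) t
    show 0 ≤ f t - SJ f (fun _ => True) t
    linarith
  zero_outside := fun t h => by
    show f t - SJ f (fun _ => True) t = 0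
    rw [hf.zero_outside t h, SJ_zero_of_ft hf _ (hf.zero_outside t h)]; ring
  rightCont := fun t ht => (hf.rightCont t ht).sub (SJ_rightCont hf _ ht)
  leftLimEx := fun t ht => by
    have hTend : Tendsto (fun u => f u - SJ f (fun _ => True) u) (𝓝[<] t)
        (𝓝 (Function.leftLim f t - SJL f (fun _ => True) t)) :=
      Tendsto.sub (hf.leftLimEx t ht) (SJ_leftLim hf _ ht)
    rw [leftLim_eq_of_tendsto hTend]
    exact hTend
  one := by
    show f 1 - SJ f (fun _ => True) 1 = 0
    rw [hf.one, SJ_zero_of_ft hf _ hf.one]; ring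
  jump_nonneg := fun t ht => le_of_eq (jump_sub_SJ hf ht).symm

end Exc

open Exc in
theorem statement9' (f : ℝ → ℝ) (hf : IsExcursion f) (ε : ℝ) (hε : 0 < ε) :
    (∀ t ∈ Icc (0:ℝ) 1, dT f t 1 = f t - Jop f t) ∧
    IsExcursion (fun t => f t - Jop f t) ∧
    (∀ t ∈ Icc (0:ℝ) 1, jump (fun u => f u - Jop f u) t = 0) ∧
    IsExcursion (Jop f) ∧ IsPJG (Jop f) ∧
    IsExcursion (Jeps f ε) ∧ IsPJG (Jeps f ε) ∧
    (∀ t ∈ Icc (0:ℝ) 1, jump (Jop f) t = jump f t) ∧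
    (∀ t ∈ Icc (0:ℝ) 1, jump (Jeps f ε) t = if ε ≤ jump f t then jump f t else 0) ∧
    (∀ t ∈ Icc (0:ℝ) 1, 0 < jump (Jeps f ε) t → ε ≤ jump (Jeps f ε) t) ∧
    (∀ s ∈ Icc (0:ℝ) 1, ∀ t ∈ Icc (0:ℝ) 1, xst (Jop f) s t = xst f s t) := by
  have hJop := Jop_eq_SJ hf
  have hJeps := Jeps_eq_SJ hf ε
  have hjeps : ∀ t ∈ Icc (0:ℝ) 1, jump (Jeps f ε) t = if ε ≤ jump f t then jump f t else 0 := by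
    intro t ht
    rw [hJeps, jump_SJ hf _ ht]
  refine ⟨fun t ht => dT_to_one hf ht, ?_, ?_, ?_, ?_, ?_, ?_, ?_, hjeps, ?_, ?_⟩
  · rw [hJop]; exact exc_sub_SJ hf
  · intro t ht; rw [hJop]; exact jump_sub_SJ hf ht
  · rw [hJop]; exact exc_SJ hf _
  · intro t ht; rw [hJop]; exact (pjg_SJ hf _ ht).symm
  · rw [hJeps]; exact exc_SJ hf _
  · intro t ht; rw [hJeps]; exact (pjg_SJ hf _ ht).symm
  · intro t ht; rw [hJop, jump_SJ hf _ ht, if_pos trivial]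
  · intro t ht hpos
    rw [hjeps t ht] at hpos ⊢
    split_ifs with h
    · exact h
    · rw [if_neg h] at hpos; exact absurd hpos (lt_irrefl 0)
  · intro s hs t ht
    rw [hJop, xst_SJ hf _ hs ht, if_pos trivial]


theorem statement9 (f : ℝ → ℝ) (hf : IsExcursion f) (ε : ℝ) (hε : 0 < ε) :
    (∀ t ∈ Icc (0:ℝ) 1, dT f t 1 = f t - Jop f t) ∧
    IsExcursion (fun t => f t - Jop f t) ∧
    (∀ t ∈ Icc (0:ℝ) 1, jump (fun u => f u - Jop f u) t = 0) ∧
    IsExcursion (Jop f) ∧ IsPJG (Jop f) ∧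
    IsExcursion (Jeps f ε) ∧ IsPJG (Jeps f ε) ∧
    (∀ t ∈ Icc (0:ℝ) 1, jump (Jop f) t = jump f t) ∧
    (∀ t ∈ Icc (0:ℝ) 1, jump (Jeps f ε) t = if ε ≤ jump f t then jump f t else 0) ∧
    (∀ t ∈ Icc (0:ℝ) 1, 0 < jump (Jeps f ε) t → ε ≤ jump (Jeps f ε) t) ∧
    (∀ s ∈ Icc (0:ℝ) 1, ∀ t ∈ Icc (0:ℝ) 1, xst (Jop f) s t = xst f s t) :=
  statement9' f hf ε hε
end
end

section
/- Let f be an excursion and ε > 0. Then g := f − Jf + J^ε f is an excursion, x_s^t(g) = x_s^t(f)·1_{Δ_s(f) ≥ ε} for all s,t ∈ [0,1], and Jg = J^ε f. -/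
open Set Filter Topology
open scoped Classical

noncomputable section

namespace St11

theorem tri (A b c : ℝ) : max (A - b) 0 = max (min A c - b) 0 + max (A - max b c) 0 := by
  rcases le_total A c with h | h <;> rcases le_total b c with h2 | h2 <;>
      rcases le_total A b with h3 | h3 <;>
    simp only [min_def, max_def] <;> split_ifs <;> linarith

theorem min_cap {x M b : ℝ} (h : x ≤ b) : min x M = min x (min M b) := by
  rw [min_comm M b, ← min_assoc, min_eq_left h]

section

variable {f : ℝ → ℝ} {ε : ℝ}

theorem exc_nonneg (hf : IsExcursion f) (t : ℝ) : 0 ≤ f t := by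
  by_cases ht : t ∈ Icc (0:ℝ) 1
  · exact hf.nonneg t ht
  · rw [hf.zero_outside t ht]

theorem exc_zero_of_neg (hf : IsExcursion f) {t : ℝ} (ht : t < 0) : f t = 0 :=
  hf.zero_outside t fun hm => absurd hm.1 (not_le.2 ht)

theorem mem_of_pos (hf : IsExcursion f) {t : ℝ} (h : f t ≠ 0) : t ∈ Icc (0:ℝ) 1 := by
  by_contra hc; exact h (hf.zero_outside t hc)

theorem lm_zero (f : ℝ → ℝ) : lm f 0 = 0 := if_pos rfl

theorem lm_zero_of_neg (hz : ∀ u, u < 0 → f u = 0) {r : ℝ} (hr : r < 0) : lm f r = 0 := by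
  have h1 : lm f r = Function.leftLim f r := if_neg (ne_of_lt hr)
  rw [h1]
  refine leftLim_eq_of_tendsto ?_
  refine Tendsto.congr' ?_ (tendsto_const_nhds (x := (0:ℝ)) (f := 𝓝[<] r))
  exact eventuallyEq_of_mem self_mem_nhdsWithin fun u hu => (hz u (lt_trans hu hr)).symm

theorem lm_zero_of_gt_one (hf : IsExcursion f) {r : ℝ} (hr : 1 < r) : lm f r = 0 := by
  have h1 : lm f r = Function.leftLim f r := if_neg (by linarith)
  rw [h1]
  refine leftLim_eq_of_tendsto ?_
  refine Tendsto.congr' ?_ (tendsto_const_nhds (x := (0:ℝ)) (f := 𝓝[<] r))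
  refine eventuallyEq_of_mem (Ioo_mem_nhdsLT_of_mem ⟨hr, le_rfl⟩) fun u hu => ?_
  exact (hf.zero_outside u fun hm => absurd hm.2 (not_le.2 hu.1)).symm

theorem lm_nonneg (hf : IsExcursion f) (r : ℝ) : 0 ≤ lm f r := by
  rcases lt_trichotomy r 0 with h | h | h
  · rw [lm_zero_of_neg (fun u hu => exc_zero_of_neg hf hu) h]
  · rw [h, lm_zero]
  · by_cases h1 : r ≤ 1
    · have h2 : lm f r = Function.leftLim f r := if_neg (ne_of_gt h)
      rw [h2]
      exact ge_of_tendsto (hf.leftLimEx r ⟨h, h1⟩)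
        (Filter.Eventually.of_forall fun u => exc_nonneg hf u)
    · rw [lm_zero_of_gt_one hf (not_le.1 h1)]

theorem bddBelow_image (hnn : ∀ u, 0 ≤ f u) (s t : ℝ) : BddBelow (f '' Icc s t) :=
  ⟨0, fun y ⟨u, _, hu⟩ => hu ▸ hnn u⟩

theorem infIcc_le (hnn : ∀ u, 0 ≤ f u) {s t u : ℝ} (hu : u ∈ Icc s t) : infIcc f s t ≤ f u :=
  csInf_le (bddBelow_image hnn s t) ⟨u, hu, rfl⟩

theorem le_infIcc {s t c : ℝ} (hst : s ≤ t) (h : ∀ u ∈ Icc s t, c ≤ f u) : c ≤ infIcc f s t :=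
  le_csInf ⟨f s, s, ⟨le_rfl, hst⟩, rfl⟩ fun y ⟨u, hu, huy⟩ => huy ▸ h u hu

theorem infIcc_nonneg (hnn : ∀ u, 0 ≤ f u) {s t : ℝ} (hst : s ≤ t) : 0 ≤ infIcc f s t :=
  le_infIcc hst fun u _ => hnn u

theorem infIcc_split (hnn : ∀ u, 0 ≤ f u) {s u t : ℝ} (h1 : s ≤ u) (h2 : u ≤ t) :
    infIcc f s t = min (infIcc f s u) (infIcc f u t) := by
  unfold infIcc
  rw [← Set.Icc_union_Icc_eq_Icc h1 h2, Set.image_union,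
    csInf_union (bddBelow_image hnn s u) ((Set.nonempty_Icc.2 h1).image f)
      (bddBelow_image hnn u t) ((Set.nonempty_Icc.2 h2).image f)]

theorem infIcc_self (f : ℝ → ℝ) (t : ℝ) : infIcc f t t = f t := by
  unfold infIcc
  rw [Set.Icc_self, Set.image_singleton, csInf_singleton]

theorem inf_le_lm (hf : IsExcursion f) {s r t : ℝ} (hr : r ∈ Ioc (0:ℝ) 1) (hs : s < r)
    (hrt : r ≤ t) : infIcc f s t ≤ lm f r := by
  have h1 : lm f r = Function.leftLim f r := if_neg (ne_of_gt hr.1)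
  rw [h1]
  refine ge_of_tendsto (hf.leftLimEx r hr) ?_
  filter_upwards [Ioo_mem_nhdsLT_of_mem (⟨hs, le_rfl⟩ : r ∈ Ioc s r)] with u hu
  exact infIcc_le (exc_nonneg hf) ⟨hu.1.le, hu.2.le.trans hrt⟩

theorem xst_nonneg (F : ℝ → ℝ) (r t : ℝ) : 0 ≤ xst F r t := by
  unfold xst; split_ifs
  exacts [le_max_right _ _, le_rfl]

theorem xst_of_le {F : ℝ → ℝ} {r t : ℝ} (h : r ≤ t) :
    xst F r t = max (infIcc F r t - lm F r) 0 := if_pos h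

theorem xst_of_not_le {F : ℝ → ℝ} {r t : ℝ} (h : ¬ r ≤ t) : xst F r t = 0 := if_neg h

theorem xtt (hf : IsExcursion f) {t : ℝ} (ht : t ∈ Icc (0:ℝ) 1) : xst f t t = jump f t := by
  rw [xst_of_le le_rfl, infIcc_self]
  have := hf.jump_nonneg t ht
  unfold jump at *
  exact max_eq_left this


theorem keyL (hf : IsExcursion f) (t c : ℝ) (F : Finset ℝ) :
    (∀ r ∈ F, r ≤ t) → ∀ M : ℝ,
      ∑ r ∈ F, max (min (infIcc f r t) M - max (lm f r) c) 0 ≤ max (M - c) 0 := by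
  classical
  induction F using Finset.induction_on_max with
  | empty => intro _ M; simp
  | insert a s ha ih =>
    intro hF M
    have hat : a ≤ t := hF a (Finset.mem_insert_self a s)
    have has : a ∉ s := fun h => lt_irrefl a (ha a h)
    rw [Finset.sum_insert has]
    by_cases hpos : min (infIcc f a t) M ≤ max (lm f a) c
    · rw [max_eq_right (by linarith : min (infIcc f a t) M - max (lm f a) c ≤ 0), add_comm,
        add_zero]
      exact ih (fun r hr => hF r (Finset.mem_insert_of_mem hr)) M
    push_neg at hpos
    have hMc : max (lm f a) c < M := lt_of_lt_of_le hpos (min_le_right _ _)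
    have hcM : c < M := lt_of_le_of_lt (le_max_right _ c) hMc
    have hfa : infIcc f a t ≤ f a := infIcc_le (exc_nonneg hf) ⟨le_rfl, hat⟩
    have hbnn : 0 ≤ lm f a := lm_nonneg hf a
    have hfapos : 0 < f a := by
      have h1 := lt_of_lt_of_le hpos (min_le_left _ _)
      have h2 := le_max_left (lm f a) c
      linarith
    have haI : a ∈ Icc (0:ℝ) 1 := mem_of_pos hf (ne_of_gt hfapos)
    rcases eq_or_lt_of_le haI.1 with h0 | h0
    · -- a = 0, all elements of s are negative and contribute 0
      have hz : ∀ r ∈ s, max (min (infIcc f r t) M - max (lm f r) c) 0 = 0 := by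
        intro r hr
        have hrneg : r < 0 := by have := ha r hr; rw [← h0] at this; exact this
        have hrt : r ≤ t := hF r (Finset.mem_insert_of_mem hr)
        have h1 : infIcc f r t ≤ f r := infIcc_le (exc_nonneg hf) ⟨le_rfl, hrt⟩
        have h2 : f r = 0 := exc_zero_of_neg hf hrneg
        have h3 : lm f r = 0 := lm_zero_of_neg (fun u hu => exc_zero_of_neg hf hu) hrneg
        refine max_eq_right ?_
        have h4 := min_le_left (infIcc f r t) M
        have h5 := le_max_left (lm f r) c
        linarith
      rw [Finset.sum_eq_zero hz, add_zero]
      have h6 := min_le_right (infIcc f a t) M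
      have h7 := le_max_right (lm f a) c
      exact max_le_max (by linarith) le_rfl
    · -- 0 < a
      have haI2 : a ∈ Ioc (0:ℝ) 1 := ⟨h0, haI.2⟩
      have hrw : ∀ r ∈ s, max (min (infIcc f r t) M - max (lm f r) c) 0
          = max (min (infIcc f r t) (min M (lm f a)) - max (lm f r) c) 0 := by
        intro r hr
        rw [← min_cap (inf_le_lm hf haI2 (ha r hr) hat)]
      rw [Finset.sum_congr rfl hrw]
      have hih := ih (fun r hr => hF r (Finset.mem_insert_of_mem hr)) (min M (lm f a))
      rw [max_eq_left (le_of_lt (sub_pos.2 hpos))]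
      have h5 : min (infIcc f a t) M ≤ M := min_le_right _ _
      rw [max_eq_left (by linarith : (0:ℝ) ≤ M - c)]
      rcases le_total (lm f a) c with hbc | hbc
      · have h8 : min M (lm f a) - c ≤ 0 := by
          have := min_le_right M (lm f a); linarith
        rw [max_eq_right h8] at hih
        have h9 : max (lm f a) c = c := max_eq_right hbc
        linarith
      · have hbM : lm f a < M := by
          have := le_max_left (lm f a) c; linarith
        rw [show M ⊓ lm f a = lm f a from min_eq_right (le_of_lt hbM)] at hih ⊢
        rw [max_eq_left (by linarith : (0:ℝ) ≤ lm f a - c)] at hih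
        have h9 : max (lm f a) c = lm f a := max_eq_left hbc
        linarith

theorem finBound (hf : IsExcursion f) (w c M : ℝ) (u : ℝ → ℝ)
    (h0 : ∀ r, 0 ≤ u r) (hz : ∀ r, ¬ r ≤ w → u r = 0)
    (hle : ∀ r, r ≤ w → u r ≤ max (min (infIcc f r w) M - max (lm f r) c) 0) :
    ∀ F : Finset ℝ, ∑ r ∈ F, u r ≤ max (M - c) 0 := by
  classical
  intro F
  rw [← Finset.sum_filter_add_sum_filter_not F (fun r => r ≤ w)]
  rw [Finset.sum_eq_zero (fun r hr => hz r (Finset.mem_filter.1 hr).2), add_zero]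
  calc ∑ r ∈ F.filter (fun r => r ≤ w), u r
      ≤ ∑ r ∈ F.filter (fun r => r ≤ w),
          max (min (infIcc f r w) M - max (lm f r) c) 0 :=
        Finset.sum_le_sum fun r hr => hle r (Finset.mem_filter.1 hr).2
    _ ≤ max (M - c) 0 := keyL hf w c _ (fun r hr => (Finset.mem_filter.1 hr).2) M

theorem summableBound (hf : IsExcursion f) (w c M : ℝ) (u : ℝ → ℝ)
    (h0 : ∀ r, 0 ≤ u r) (hz : ∀ r, ¬ r ≤ w → u r = 0)
    (hle : ∀ r, r ≤ w → u r ≤ max (min (infIcc f r w) M - max (lm f r) c) 0) :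
    Summable u :=
  summable_of_sum_le h0 (finBound hf w c M u h0 hz hle)

theorem tsumBound (hf : IsExcursion f) (w c M : ℝ) (u : ℝ → ℝ)
    (h0 : ∀ r, 0 ≤ u r) (hz : ∀ r, ¬ r ≤ w → u r = 0)
    (hle : ∀ r, r ≤ w → u r ≤ max (min (infIcc f r w) M - max (lm f r) c) 0) :
    ∑' r, u r ≤ max (M - c) 0 :=
  Summable.tsum_le_of_sum_le (summableBound hf w c M u h0 hz hle) (finBound hf w c M u h0 hz hle)

theorem xst_bound (hf : IsExcursion f) (t r : ℝ) (hr : r ≤ t) :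
    xst f r t = max (min (infIcc f r t) (f t) - max (lm f r) 0) 0 := by
  rw [xst_of_le hr, min_eq_left (infIcc_le (exc_nonneg hf) ⟨hr, le_rfl⟩),
    max_eq_left (lm_nonneg hf r)]

theorem summable_xst (hf : IsExcursion f) (t : ℝ) : Summable (fun r => xst f r t) :=
  summableBound hf t 0 (f t) _ (fun r => xst_nonneg f r t) (fun r h => xst_of_not_le h)
    (fun r h => le_of_eq (xst_bound hf t r h))

theorem ite_pre (F : ℝ → ℝ) (t r : ℝ) : (if pre F r t then xst F r t else 0) = xst F r t := by
  split_ifs with h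
  · rfl
  · by_cases hrt : r ≤ t
    · rw [xst_of_le hrt]
      have h2 : ¬ lm F r ≤ infIcc F r t := fun hc => h ⟨hrt, hc⟩
      rw [max_eq_right (by linarith [not_le.1 h2])]
    · rw [xst_of_not_le hrt]

theorem ite_pre_and (F : ℝ → ℝ) (t r : ℝ) (P : Prop) :
    (if pre F r t ∧ P then xst F r t else 0) = if P then xst F r t else 0 := by
  by_cases hP : P
  · rw [if_pos hP, ← ite_pre F t r]
    by_cases hpre : pre F r t
    · rw [if_pos hpre, if_pos ⟨hpre, hP⟩]
    · rw [if_neg hpre, if_neg (fun hc => hpre hc.1)]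
  · rw [if_neg hP, if_neg (fun hc => hP hc.2)]

end

def xe (f : ℝ → ℝ) (ε r u : ℝ) : ℝ := if jump f r < ε then xst f r u else 0

def Hf (f : ℝ → ℝ) (ε u : ℝ) : ℝ := ∑' r : ℝ, xe f ε r u

section

variable {f : ℝ → ℝ} {ε : ℝ}

theorem xe_nonneg (f : ℝ → ℝ) (ε r u : ℝ) : 0 ≤ xe f ε r u := by
  unfold xe; split_ifs
  exacts [xst_nonneg f r u, le_rfl]

theorem xe_le_xst (f : ℝ → ℝ) (ε r u : ℝ) : xe f ε r u ≤ xst f r u := by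
  unfold xe; split_ifs
  exacts [le_rfl, xst_nonneg f r u]

theorem xe_of_not_le {r u : ℝ} (h : ¬ r ≤ u) : xe f ε r u = 0 := by
  unfold xe; rw [xst_of_not_le h, ite_self]

theorem summable_xe (hf : IsExcursion f) (u : ℝ) : Summable (fun r => xe f ε r u) :=
  Summable.of_nonneg_of_le (fun r => xe_nonneg f ε r u) (fun r => xe_le_xst f ε r u)
    (summable_xst hf u)

theorem summable_big (hf : IsExcursion f) (u : ℝ) :
    Summable (fun r => if ε ≤ jump f r then xst f r u else 0) := by
  refine Summable.of_nonneg_of_le (fun r => ?_) (fun r => ?_) (summable_xst hf u)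
  · split_ifs
    exacts [xst_nonneg f r u, le_rfl]
  · split_ifs
    exacts [le_rfl, xst_nonneg f r u]

theorem geq (hf : IsExcursion f) (u : ℝ) :
    f u - Jop f u + Jeps f ε u = f u - Hf f ε u := by
  have h1 : Jop f u = Jeps f ε u + Hf f ε u := by
    unfold Jop Jeps Hf
    rw [tsum_congr (fun r => ite_pre f u r),
      tsum_congr (fun r => ite_pre_and f u r (ε ≤ jump f r)),
      ← Summable.tsum_add (summable_big hf u) (summable_xe hf u)]
    refine tsum_congr fun r => ?_
    unfold xe
    by_cases h : ε ≤ jump f r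
    · rw [if_pos h, if_neg (not_lt.2 h), add_zero]
    · rw [if_neg h, if_pos (not_le.1 h), zero_add]
  rw [h1]; ring

theorem Hf_le (hf : IsExcursion f) (t : ℝ) : Hf f ε t ≤ f t := by
  have := tsumBound hf t 0 (f t) (fun r => xe f ε r t) (fun r => xe_nonneg f ε r t)
    (fun r h => xe_of_not_le h)
    (fun r h => (xe_le_xst f ε r t).trans (le_of_eq (xst_bound hf t r h)))
  rwa [sub_zero, max_eq_left (exc_nonneg hf t)] at this

theorem Hf_zero (hf : IsExcursion f) {t : ℝ} (hft : f t = 0) : Hf f ε t = 0 := by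
  unfold Hf
  rw [tsum_congr (fun r => ?_), tsum_zero]
  unfold xe
  by_cases hrt : r ≤ t
  · rw [xst_of_le hrt, max_eq_right ?_, ite_self]
    have h1 : infIcc f r t ≤ f t := infIcc_le (exc_nonneg hf) ⟨hrt, le_rfl⟩
    linarith [lm_nonneg hf r]
  · rw [xst_of_not_le hrt, ite_self]

theorem Hf_at_zero (hf : IsExcursion f) : Hf f ε 0 = xe f ε 0 0 := by
  unfold Hf
  refine tsum_eq_single 0 ?_
  intro r hr
  rcases lt_or_gt_of_ne hr with h | h
  · have hlm : lm f r = 0 := lm_zero_of_neg (fun v hv => exc_zero_of_neg hf hv) h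
    have hfr : f r = 0 := exc_zero_of_neg hf h
    unfold xe
    rw [xst_of_le (le_of_lt h), hlm, max_eq_right ?_, ite_self]
    have : infIcc f r 0 ≤ f r := infIcc_le (exc_nonneg hf) ⟨le_rfl, le_of_lt h⟩
    linarith
  · exact xe_of_not_le (not_le.2 h)


theorem HL1 (hf : IsExcursion f) {t : ℝ} (ht : t ∈ Ico (0:ℝ) 1) :
    Tendsto (Hf f ε) (𝓝[>] t) (𝓝 (Hf f ε t)) := by
  rw [Metric.tendsto_nhdsWithin_nhds]
  intro δ hδ
  obtain ⟨η₁, hη₁, hη⟩ := Metric.tendsto_nhdsWithin_nhds.1 (hf.rightCont t ht) (δ/8)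
    (by linarith)
  refine ⟨min η₁ (1 - t), lt_min hη₁ (by linarith [ht.2]), ?_⟩
  intro u hu hud
  have hut : t < u := hu
  rw [Real.dist_eq, abs_of_pos (by linarith)] at hud
  have hu1 : u ≤ 1 := by
    have := lt_of_lt_of_le hud (min_le_right _ _); linarith
  have hdu1 : u - t < η₁ := lt_of_lt_of_le hud (min_le_left _ _)
  have hnear : ∀ v, t < v → v ≤ u → |f v - f t| < δ/8 := by
    intro v hv1 hv2
    have hd : dist v t < η₁ := by
      rw [Real.dist_eq, abs_of_pos (by linarith)]; linarith
    have := hη (mem_Ioi.2 hv1) hd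
    rwa [Real.dist_eq] at this
  have hc1 : f t - δ/8 ≤ infIcc f t u := by
    refine le_infIcc (le_of_lt hut) ?_
    intro v hv
    rcases eq_or_lt_of_le hv.1 with h | h
    · rw [← h]; linarith
    · have := abs_lt.1 (hnear v h hv.2); linarith
  have hc2 : infIcc f t u ≤ f t := infIcc_le (exc_nonneg hf) ⟨le_rfl, le_of_lt hut⟩
  have hfu := abs_lt.1 (hnear u hut le_rfl)
  set c := infIcc f t u with hc
  set P : ℝ → ℝ := fun r =>
    if r ≤ t then (if jump f r < ε then max (infIcc f r t - max (lm f r) c) 0 else 0) else 0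
    with hP
  set N : ℝ → ℝ := fun r => if t < r then xe f ε r u else 0 with hN
  have hPnn : ∀ r, 0 ≤ P r := by
    intro r; rw [hP]; dsimp only
    split_ifs
    exacts [le_max_right _ _, le_rfl, le_rfl]
  have hNnn : ∀ r, 0 ≤ N r := by
    intro r; rw [hN]; dsimp only
    split_ifs
    exacts [xe_nonneg f ε r u, le_rfl]
  have hdiff : ∀ r, xe f ε r t - xe f ε r u = P r - N r := by
    intro r
    rw [hP, hN]; dsimp only
    by_cases hrt : r ≤ t
    · rw [if_pos hrt, if_neg (not_lt.2 hrt), sub_zero]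
      unfold xe
      by_cases hsm : jump f r < ε
      · rw [if_pos hsm, if_pos hsm, if_pos hsm, xst_of_le hrt,
          xst_of_le (hrt.trans (le_of_lt hut)),
          infIcc_split (exc_nonneg hf) hrt (le_of_lt hut), ← hc]
        have := tri (infIcc f r t) (lm f r) c
        linarith
      · rw [if_neg hsm, if_neg hsm, if_neg hsm, sub_zero]
    · rw [if_neg hrt, if_pos (not_le.1 hrt), xe_of_not_le hrt, zero_sub]
  have hPz : ∀ r, ¬ r ≤ t → P r = 0 := by
    intro r h; rw [hP]; dsimp only; rw [if_neg h]
  have hPle : ∀ r, r ≤ t → P r ≤ max (min (infIcc f r t) (f t) - max (lm f r) c) 0 := by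
    intro r hrt
    rw [hP]; dsimp only; rw [if_pos hrt]
    split_ifs with hsm
    · rw [min_eq_left (infIcc_le (exc_nonneg hf) ⟨hrt, le_rfl⟩)]
    · exact le_max_right _ _
  have hSP : Summable P := summableBound hf t c (f t) P hPnn hPz hPle
  have hTP : ∑' r, P r ≤ max (f t - c) 0 := tsumBound hf t c (f t) P hPnn hPz hPle
  have hNz : ∀ r, ¬ r ≤ u → N r = 0 := by
    intro r h; rw [hN]; dsimp only
    split_ifs with h2
    · exact xe_of_not_le h
    · rfl
  have hNle : ∀ r, r ≤ u → N r ≤ max (min (infIcc f r u) (f u) - max (lm f r) c) 0 := by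
    intro r hru
    rw [hN]; dsimp only
    split_ifs with htr
    · have hr1 : r ∈ Ioc (0:ℝ) 1 := ⟨lt_of_le_of_lt ht.1 htr, hru.trans hu1⟩
      have hcl : c ≤ lm f r := inf_le_lm hf hr1 htr hru
      calc xe f ε r u ≤ xst f r u := xe_le_xst f ε r u
        _ = _ := by
            rw [xst_of_le hru, min_eq_left (infIcc_le (exc_nonneg hf) ⟨hru, le_rfl⟩),
              max_eq_left hcl]
    · exact le_max_right _ _
  have hSN : Summable N := summableBound hf u c (f u) N hNnn hNz hNle
  have hTN : ∑' r, N r ≤ max (f u - c) 0 := tsumBound hf u c (f u) N hNnn hNz hNle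
  have key : Hf f ε t - Hf f ε u = ∑' r, P r - ∑' r, N r := by
    unfold Hf
    rw [← Summable.tsum_sub (summable_xe hf t) (summable_xe hf u), tsum_congr hdiff,
      Summable.tsum_sub hSP hSN]
  have h0P : 0 ≤ ∑' r, P r := tsum_nonneg hPnn
  have h0N : 0 ≤ ∑' r, N r := tsum_nonneg hNnn
  have hb1 : max (f t - c) 0 ≤ δ/8 := max_le (by linarith) (by linarith)
  have hb2 : max (f u - c) 0 ≤ δ/4 := max_le (by linarith) (by linarith)
  rw [Real.dist_eq, abs_lt]
  constructor <;> linarith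

theorem HL2 (hf : IsExcursion f) {t : ℝ} (ht : t ∈ Ioc (0:ℝ) 1) :
    Tendsto (Hf f ε) (𝓝[<] t) (𝓝 (Hf f ε t - xe f ε t t)) := by
  have hlmt : lm f t = Function.leftLim f t := if_neg (ne_of_gt ht.1)
  have hjt : lm f t ≤ f t := by
    have := hf.jump_nonneg t ⟨le_of_lt ht.1, ht.2⟩
    unfold jump at this; linarith
  rw [Metric.tendsto_nhdsWithin_nhds]
  intro δ hδ
  obtain ⟨η₁, hη₁, hη⟩ := Metric.tendsto_nhdsWithin_nhds.1 (hf.leftLimEx t ht) (δ/8)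
    (by linarith)
  refine ⟨min η₁ t, lt_min hη₁ ht.1, ?_⟩
  intro u hu hud
  have hut : u < t := hu
  rw [Real.dist_eq, abs_of_neg (by linarith), neg_sub] at hud
  have hu0 : 0 ≤ u := by
    have := lt_of_lt_of_le hud (min_le_right _ _); linarith
  have hdu1 : t - u < η₁ := lt_of_lt_of_le hud (min_le_left _ _)
  have hnear : ∀ v, u ≤ v → v < t → |f v - lm f t| < δ/8 := by
    intro v h1 h2
    have hd : dist v t < η₁ := by
      rw [Real.dist_eq, abs_of_neg (by linarith)]; linarith
    have := hη (mem_Iio.2 h2) hd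
    rwa [Real.dist_eq, ← hlmt] at this
  have hc1 : lm f t - δ/8 ≤ infIcc f u t := by
    refine le_infIcc (le_of_lt hut) ?_
    intro v hv
    rcases lt_or_eq_of_le hv.2 with h | h
    · have := abs_lt.1 (hnear v hv.1 h); linarith
    · rw [h]; linarith
  have hc2 : infIcc f u t ≤ f u := infIcc_le (exc_nonneg hf) ⟨le_rfl, le_of_lt hut⟩
  have hfu := abs_lt.1 (hnear u le_rfl hut)
  set c := infIcc f u t with hc
  set P : ℝ → ℝ := fun r =>
    if r ≤ u then (if jump f r < ε then max (infIcc f r u - max (lm f r) c) 0 else 0) else 0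
    with hP
  set Q : ℝ → ℝ := fun r => if u < r ∧ r < t then xe f ε r t else 0 with hQ
  set I : ℝ → ℝ := fun r => if r = t then xe f ε t t else 0 with hI
  have hPnn : ∀ r, 0 ≤ P r := by
    intro r; rw [hP]; dsimp only
    split_ifs
    exacts [le_max_right _ _, le_rfl, le_rfl]
  have hQnn : ∀ r, 0 ≤ Q r := by
    intro r; rw [hQ]; dsimp only
    split_ifs
    exacts [xe_nonneg f ε r t, le_rfl]
  have hdiff : ∀ r, xe f ε r t - xe f ε r u = (Q r + I r) - P r := by
    intro r
    rw [hP, hQ, hI]; dsimp only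
    by_cases hru : r ≤ u
    · have h1 : ¬ (u < r ∧ r < t) := fun h => absurd hru (not_le.2 h.1)
      have h2 : r ≠ t := ne_of_lt (lt_of_le_of_lt hru hut)
      rw [if_pos hru, if_neg h1, if_neg h2, add_zero, zero_sub]
      unfold xe
      by_cases hsm : jump f r < ε
      · rw [if_pos hsm, if_pos hsm, if_pos hsm, xst_of_le hru,
          xst_of_le (hru.trans (le_of_lt hut)),
          infIcc_split (exc_nonneg hf) hru (le_of_lt hut), ← hc]
        have := tri (infIcc f r u) (lm f r) c
        linarith
      · rw [if_neg hsm, if_neg hsm, if_neg hsm]; ring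
    · have hur : u < r := not_le.1 hru
      rw [if_neg hru, sub_zero, xe_of_not_le hru, sub_zero]
      rcases lt_trichotomy r t with h | h | h
      · rw [if_pos ⟨hur, h⟩, if_neg (ne_of_lt h), add_zero]
      · rw [if_neg (fun hh : u < r ∧ r < t => absurd h (ne_of_lt hh.2)), if_pos h, h, zero_add]
      · rw [if_neg (fun hh : u < r ∧ r < t => absurd hh.2 (not_lt.2 (le_of_lt h))),
          if_neg (ne_of_gt h), add_zero, xe_of_not_le (not_le.2 h)]
  have hPz : ∀ r, ¬ r ≤ u → P r = 0 := by
    intro r h; rw [hP]; dsimp only; rw [if_neg h]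
  have hPle : ∀ r, r ≤ u → P r ≤ max (min (infIcc f r u) (f u) - max (lm f r) c) 0 := by
    intro r hru
    rw [hP]; dsimp only; rw [if_pos hru]
    split_ifs with hsm
    · rw [min_eq_left (infIcc_le (exc_nonneg hf) ⟨hru, le_rfl⟩)]
    · exact le_max_right _ _
  have hSP : Summable P := summableBound hf u c (f u) P hPnn hPz hPle
  have hTP : ∑' r, P r ≤ max (f u - c) 0 := tsumBound hf u c (f u) P hPnn hPz hPle
  have hQz : ∀ r, ¬ r ≤ t → Q r = 0 := by
    intro r h; rw [hQ]; dsimp only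
    rw [if_neg (fun hh : u < r ∧ r < t => h (le_of_lt hh.2))]
  have hQle : ∀ r, r ≤ t → Q r ≤ max (min (infIcc f r t) (lm f t) - max (lm f r) c) 0 := by
    intro r hrt
    rw [hQ]; dsimp only
    split_ifs with h
    · have hr1 : r ∈ Ioc (0:ℝ) 1 := ⟨lt_of_le_of_lt hu0 h.1, hrt.trans ht.2⟩
      have hcl : c ≤ lm f r := inf_le_lm hf hr1 h.1 hrt
      have hinf : infIcc f r t ≤ lm f t := inf_le_lm hf ht h.2 le_rfl
      calc xe f ε r t ≤ xst f r t := xe_le_xst f ε r t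
        _ = _ := by rw [xst_of_le hrt, min_eq_left hinf, max_eq_left hcl]
    · exact le_max_right _ _
  have hSQ : Summable Q := summableBound hf t c (lm f t) Q hQnn hQz hQle
  have hTQ : ∑' r, Q r ≤ max (lm f t - c) 0 := tsumBound hf t c (lm f t) Q hQnn hQz hQle
  have hSI : Summable I := (hasSum_ite_eq t (xe f ε t t)).summable
  have hTI : ∑' r, I r = xe f ε t t := (hasSum_ite_eq t (xe f ε t t)).tsum_eq
  have key : Hf f ε t - Hf f ε u = (∑' r, Q r + xe f ε t t) - ∑' r, P r := by
    unfold Hf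
    rw [← Summable.tsum_sub (summable_xe hf t) (summable_xe hf u), tsum_congr hdiff,
      Summable.tsum_sub (hSQ.add hSI) hSP, Summable.tsum_add hSQ hSI, hTI]
  have h0P : 0 ≤ ∑' r, P r := tsum_nonneg hPnn
  have h0Q : 0 ≤ ∑' r, Q r := tsum_nonneg hQnn
  have hb1 : max (f u - c) 0 ≤ δ/4 := max_le (by linarith) (by linarith)
  have hb2 : max (lm f t - c) 0 ≤ δ/8 := max_le (by linarith) (by linarith)
  rw [Real.dist_eq, abs_lt]
  constructor <;> linarith


theorem lmg' (hf : IsExcursion f) {s : ℝ} (hs : s ∈ Icc (0:ℝ) 1) :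
    lm (fun u => f u - Hf f ε u) s = lm f s - Hf f ε s + xe f ε s s := by
  rcases eq_or_lt_of_le hs.1 with h0 | h0
  · rw [← h0, lm_zero, lm_zero, Hf_at_zero hf]
    ring
  · have hs1 : s ∈ Ioc (0:ℝ) 1 := ⟨h0, hs.2⟩
    have hlmf : lm f s = Function.leftLim f s := if_neg (ne_of_gt h0)
    have hT : Tendsto (fun u => f u - Hf f ε u) (𝓝[<] s)
        (𝓝 (lm f s - (Hf f ε s - xe f ε s s))) := by
      rw [hlmf]
      exact (hf.leftLimEx s hs1).sub (HL2 hf hs1)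
    have h1 : lm (fun u => f u - Hf f ε u) s
        = Function.leftLim (fun u => f u - Hf f ε u) s := if_neg (ne_of_gt h0)
    rw [h1, leftLim_eq_of_tendsto hT]
    ring

theorem hgex' (hf : IsExcursion f) (hε : 0 < ε) :
    IsExcursion (fun u => f u - Hf f ε u) := by
  constructor
  · intro t ht
    have := Hf_le (ε := ε) hf t
    show 0 ≤ f t - Hf f ε t
    linarith
  · intro t ht
    show f t - Hf f ε t = 0
    rw [hf.zero_outside t ht, Hf_zero hf (hf.zero_outside t ht)]; ring
  · intro t ht
    exact (hf.rightCont t ht).sub (HL1 hf ht)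
  · intro t ht
    have hT : Tendsto (fun u => f u - Hf f ε u) (𝓝[<] t)
        (𝓝 (Function.leftLim f t - (Hf f ε t - xe f ε t t))) :=
      (hf.leftLimEx t ht).sub (HL2 hf ht)
    rwa [leftLim_eq_of_tendsto hT]
  · show f 1 - Hf f ε 1 = 0
    rw [hf.one, Hf_zero hf hf.one]; ring
  · intro t ht
    unfold jump
    rw [lmg' hf ht]
    dsimp only
    have hxe : xe f ε t t ≤ jump f t := by
      unfold xe; split_ifs with h
      · rw [xtt hf ht]
      · exact hf.jump_nonneg t ht
    have := hf.jump_nonneg t ht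
    unfold jump at *
    linarith

def phiF (f : ℝ → ℝ) (ε s m r : ℝ) : ℝ :=
  if jump f r < ε ∧ r ≤ s then max (min (infIcc f r s) m - lm f r) 0 else 0

def rhoF (f : ℝ → ℝ) (ε m u r : ℝ) : ℝ :=
  if jump f r < ε ∧ r ≤ u then max (infIcc f r u - max (lm f r) m) 0 else 0

theorem phi_nonneg (f : ℝ → ℝ) (ε s m r : ℝ) : 0 ≤ phiF f ε s m r := by
  unfold phiF; split_ifs
  exacts [le_max_right _ _, le_rfl]

theorem rho_nonneg (f : ℝ → ℝ) (ε m u r : ℝ) : 0 ≤ rhoF f ε m u r := by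
  unfold rhoF; split_ifs
  exacts [le_max_right _ _, le_rfl]

theorem rho_z (f : ℝ → ℝ) (ε m u : ℝ) : ∀ r, ¬ r ≤ u → rhoF f ε m u r = 0 := by
  intro r h; unfold rhoF; rw [if_neg (fun hh => h hh.2)]

theorem summable_rho (hf : IsExcursion f) (m u : ℝ) : Summable (rhoF f ε m u) := by
  refine summableBound hf u m (f u) _ (rho_nonneg f ε m u) (rho_z f ε m u) ?_
  intro r hru
  unfold rhoF
  split_ifs with h
  · rw [min_eq_left (infIcc_le (exc_nonneg hf) ⟨hru, le_rfl⟩)]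
  · exact le_max_right _ _

theorem tsum_rho_le (hf : IsExcursion f) (m u : ℝ) :
    ∑' r, rhoF f ε m u r ≤ max (f u - m) 0 := by
  refine tsumBound hf u m (f u) _ (rho_nonneg f ε m u) (rho_z f ε m u) ?_
  intro r hru
  unfold rhoF
  split_ifs with h
  · rw [min_eq_left (infIcc_le (exc_nonneg hf) ⟨hru, le_rfl⟩)]
  · exact le_max_right _ _

theorem summable_phi (hf : IsExcursion f) (s m : ℝ) : Summable (phiF f ε s m) := by
  refine Summable.of_nonneg_of_le (phi_nonneg f ε s m) (fun r => ?_) (summable_xst hf s)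
  unfold phiF
  split_ifs with h
  · rw [xst_of_le h.2]
    exact max_le_max (by linarith [min_le_left (infIcc f r s) m]) le_rfl
  · exact xst_nonneg f r s

theorem decomp (hf : IsExcursion f) {s t u : ℝ} (hs0 : 0 ≤ s) (hsu : s ≤ u) (hut : u ≤ t)
    (ht1 : t ≤ 1) :
    ∀ r, xe f ε r u = phiF f ε s (infIcc f s t) r + rhoF f ε (infIcc f s t) u r := by
  intro r
  unfold xe phiF rhoF
  by_cases hsm : jump f r < ε
  case neg =>
    rw [if_neg hsm, if_neg (fun h => hsm h.1), if_neg (fun h => hsm h.1)]; ring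
  rw [if_pos hsm]
  by_cases hru : r ≤ u
  case neg =>
    rw [xst_of_not_le hru, if_neg (fun h => hru (h.2.trans hsu)),
      if_neg (fun h => hru h.2)]
    ring
  rw [if_pos (And.intro hsm hru), xst_of_le hru]
  by_cases hrs : r ≤ s
  · rw [if_pos (And.intro hsm hrs)]
    have hmle : infIcc f s t ≤ infIcc f s u := by
      rw [infIcc_split (exc_nonneg hf) hsu hut]
      exact min_le_left _ _
    have hminm : min (infIcc f r u) (infIcc f s t)
        = min (infIcc f r s) (infIcc f s t) := by
      rw [infIcc_split (exc_nonneg hf) hrs hsu, min_assoc, min_eq_right hmle]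
    have htri := tri (infIcc f r u) (lm f r) (infIcc f s t)
    rw [hminm] at htri
    linarith
  · rw [if_neg (fun h => hrs h.2)]
    push_neg at hrs
    have hr1 : r ∈ Ioc (0:ℝ) 1 := ⟨lt_of_le_of_lt hs0 hrs, hru.trans (hut.trans ht1)⟩
    have hlm : infIcc f s t ≤ lm f r := inf_le_lm hf hr1 hrs (hru.trans hut)
    rw [max_eq_left hlm, zero_add]

theorem H_split (hf : IsExcursion f) {s t u : ℝ} (hs0 : 0 ≤ s) (hsu : s ≤ u) (hut : u ≤ t)
    (ht1 : t ≤ 1) :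
    Hf f ε u = (∑' r, phiF f ε s (infIcc f s t) r) + ∑' r, rhoF f ε (infIcc f s t) u r := by
  unfold Hf
  rw [tsum_congr (decomp hf hs0 hsu hut ht1),
    Summable.tsum_add (summable_phi hf s (infIcc f s t)) (summable_rho hf (infIcc f s t) u)]

theorem rho_at_s_le (hf : IsExcursion f) {s m : ℝ} (hs : s ∈ Icc (0:ℝ) 1)
    (hbig : ε ≤ jump f s) (hm0 : 0 ≤ m) :
    ∑' r, rhoF f ε m s r ≤ max (lm f s - m) 0 := by
  refine tsumBound hf s m (lm f s) _ (rho_nonneg f ε m s) (rho_z f ε m s) ?_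
  intro r hrs
  unfold rhoF
  split_ifs with h
  · rcases eq_or_lt_of_le hrs with heq | hlt
    · exact absurd h.1 (not_lt.2 (heq ▸ hbig))
    · rcases eq_or_lt_of_le hs.1 with hs0 | hs0
      · have hrneg : r < 0 := by rw [← hs0] at hlt; exact hlt
        have h1 : infIcc f r s ≤ f r := infIcc_le (exc_nonneg hf) ⟨le_rfl, hrs⟩
        have h2 : f r = 0 := exc_zero_of_neg hf hrneg
        have h3 : 0 ≤ max (lm f r) m := le_trans hm0 (le_max_right _ _)
        rw [max_eq_right (by linarith)]
        exact le_max_right _ _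
      · have hinf : infIcc f r s ≤ lm f s := inf_le_lm hf ⟨hs0, hs.2⟩ hlt le_rfl
        rw [min_eq_left hinf]
  · exact le_max_right _ _

theorem rho_at_s_zero (hf : IsExcursion f) {s m : ℝ} (hs : s ∈ Icc (0:ℝ) 1)
    (hbig : ε ≤ jump f s) (hml : lm f s ≤ m) :
    ∑' r, rhoF f ε m s r = 0 := by
  have hz : ∀ r : ℝ, rhoF f ε m s r = 0 := by
    intro r
    unfold rhoF
    split_ifs with h
    · obtain ⟨hsm, hrs⟩ := h
      rcases eq_or_lt_of_le hrs with heq | hlt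
      · exact absurd hsm (not_lt.2 (heq ▸ hbig))
      · have hm0 : 0 ≤ m := le_trans (lm_nonneg hf s) hml
        have hle : infIcc f r s ≤ max (lm f r) m := by
          rcases eq_or_lt_of_le hs.1 with hs0 | hs0
          · have hrneg : r < 0 := by rw [← hs0] at hlt; exact hlt
            have h1 : infIcc f r s ≤ f r := infIcc_le (exc_nonneg hf) ⟨le_rfl, hrs⟩
            have h2 : f r = 0 := exc_zero_of_neg hf hrneg
            have := le_max_right (lm f r) m
            linarith
          · calc infIcc f r s ≤ lm f s := inf_le_lm hf ⟨hs0, hs.2⟩ hlt le_rfl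
              _ ≤ m := hml
              _ ≤ max (lm f r) m := le_max_right _ _
        rw [max_eq_right (by linarith)]
    · rfl
  rw [tsum_congr hz, tsum_zero]

theorem infg (hf : IsExcursion f) {s t : ℝ} (hs : s ∈ Icc (0:ℝ) 1) (ht : t ∈ Icc (0:ℝ) 1)
    (hst : s ≤ t) :
    infIcc (fun u => f u - Hf f ε u) s t
      = infIcc f s t - ∑' r, phiF f ε s (infIcc f s t) r := by
  have hval : ∀ u ∈ Icc s t, f u - Hf f ε u
      = f u - (∑' r, phiF f ε s (infIcc f s t) r) - ∑' r, rhoF f ε (infIcc f s t) u r := by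
    intro u hu
    rw [H_split hf hs.1 hu.1 hu.2 ht.2]; ring
  have hlow : ∀ u ∈ Icc s t, infIcc f s t - (∑' r, phiF f ε s (infIcc f s t) r)
      ≤ f u - Hf f ε u := by
    intro u hu
    have h1 := tsum_rho_le (ε := ε) hf (infIcc f s t) u
    have h2 : infIcc f s t ≤ f u := infIcc_le (exc_nonneg hf) hu
    rw [max_eq_left (by linarith)] at h1
    rw [hval u hu]
    linarith
  refine le_antisymm ?_ (le_infIcc hst hlow)
  refine le_of_forall_pos_le_add ?_
  intro δ hδ
  have hlt : sInf (f '' Icc s t) < infIcc f s t + δ := by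
    unfold infIcc at *; linarith
  obtain ⟨y, hy, hylt⟩ := exists_lt_of_csInf_lt
    (⟨f s, s, ⟨le_rfl, hst⟩, rfl⟩ : (f '' Icc s t).Nonempty) hlt
  obtain ⟨u, hu, rfl⟩ := hy
  have h0rho : 0 ≤ ∑' r, rhoF f ε (infIcc f s t) u r := tsum_nonneg (rho_nonneg f ε _ u)
  have hle : infIcc (fun u => f u - Hf f ε u) s t ≤ f u - Hf f ε u :=
    csInf_le ⟨infIcc f s t - ∑' r, phiF f ε s (infIcc f s t) r,
      fun y ⟨v, hv, hvy⟩ => hvy ▸ hlow v hv⟩ ⟨u, hu, rfl⟩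
  rw [hval u hu] at hle
  linarith

theorem part2' (hf : IsExcursion f) (hε : 0 < ε) {s t : ℝ} (hs : s ∈ Icc (0:ℝ) 1)
    (ht : t ∈ Icc (0:ℝ) 1) :
    xst (fun u => f u - Hf f ε u) s t = if ε ≤ jump f s then xst f s t else 0 := by
  by_cases hst : s ≤ t
  case neg =>
    rw [xst_of_not_le hst, xst_of_not_le (F := f) hst, ite_self]
  have hH : Hf f ε s = (∑' r, phiF f ε s (infIcc f s t) r)
      + ∑' r, rhoF f ε (infIcc f s t) s r := H_split hf hs.1 le_rfl hst ht.2
  have hms : infIcc f s t ≤ f s := infIcc_le (exc_nonneg hf) ⟨le_rfl, hst⟩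
  have hm0 : 0 ≤ infIcc f s t := infIcc_nonneg (exc_nonneg hf) hst
  have h0R : 0 ≤ ∑' r, rhoF f ε (infIcc f s t) s r := tsum_nonneg (rho_nonneg f ε _ s)
  rw [xst_of_le hst, infg hf hs ht hst, lmg' hf hs, hH]
  by_cases hbig : ε ≤ jump f s
  · rw [if_pos hbig, xst_of_le hst]
    have hxe : xe f ε s s = 0 := if_neg (not_lt.2 hbig)
    rw [hxe]
    rcases le_total (lm f s) (infIcc f s t) with hml | hml
    · rw [rho_at_s_zero hf hs hbig hml]
      congr 1
      ring
    · have h1 : ∑' r, rhoF f ε (infIcc f s t) s r ≤ lm f s - infIcc f s t := by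
        have := rho_at_s_le hf hs hbig hm0
        rwa [max_eq_left (by linarith)] at this
      rw [max_eq_right (by linarith), max_eq_right (by linarith)]
  · rw [if_neg hbig]
    have hxe : xe f ε s s = xst f s s := if_pos (not_le.1 hbig)
    rw [hxe, xtt hf hs]
    have h1 : ∑' r, rhoF f ε (infIcc f s t) s r ≤ f s - infIcc f s t := by
      have := tsum_rho_le (ε := ε) hf (infIcc f s t) s
      rwa [max_eq_left (by linarith)] at this
    have hj : jump f s = f s - lm f s := rfl
    rw [hj, max_eq_right (by linarith)]

theorem part3' (hf : IsExcursion f) (hε : 0 < ε) {t : ℝ} (ht : t ∈ Icc (0:ℝ) 1) :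
    Jop (fun u => f u - Hf f ε u) t = Jeps f ε t := by
  have hg := hgex' hf hε
  unfold Jop Jeps
  rw [tsum_congr (fun r => ite_pre (fun u => f u - Hf f ε u) t r),
    tsum_congr (fun r => ite_pre_and f t r (ε ≤ jump f r))]
  refine tsum_congr fun r => ?_
  by_cases hr : r ∈ Icc (0:ℝ) 1
  · exact part2' hf hε hr ht
  · rw [Set.mem_Icc, not_and_or] at hr
    rcases hr with hr0 | hr1
    · push_neg at hr0
      have hlmf : lm f r = 0 := lm_zero_of_neg (fun v hv => exc_zero_of_neg hf hv) hr0
      have hfr : f r = 0 := exc_zero_of_neg hf hr0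
      have hjump : jump f r = 0 := by unfold jump; rw [hfr, hlmf]; ring
      rw [hjump, if_neg (not_le.2 hε)]
      have hzg : ∀ v, v < 0 → f v - Hf f ε v = 0 := by
        intro v hv
        exact hg.zero_outside v fun hm => absurd hm.1 (not_le.2 hv)
      have hlmg : lm (fun u => f u - Hf f ε u) r = 0 := lm_zero_of_neg hzg hr0
      have hinf : infIcc (fun u => f u - Hf f ε u) r t ≤ 0 := by
        have h1 := infIcc_le (f := fun u => f u - Hf f ε u) (exc_nonneg hg)
          (⟨le_rfl, le_of_lt (lt_of_lt_of_le hr0 ht.1)⟩ : r ∈ Icc r t)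
        have h2 := hzg r hr0
        linarith
      rw [xst_of_le (le_of_lt (lt_of_lt_of_le hr0 ht.1)), hlmg,
        max_eq_right (by linarith)]
    · push_neg at hr1
      have h1 : ¬ r ≤ t := not_le.2 (lt_of_le_of_lt ht.2 hr1)
      rw [xst_of_not_le h1, xst_of_not_le (F := f) h1, ite_self]

end

end St11


theorem statement11 (f : ℝ → ℝ) (hf : IsExcursion f) (ε : ℝ) (hε : 0 < ε) :
    IsExcursion (fun t => f t - Jop f t + Jeps f ε t) ∧
    (∀ s ∈ Icc (0:ℝ) 1, ∀ t ∈ Icc (0:ℝ) 1,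
        xst (fun u => f u - Jop f u + Jeps f ε u) s t =
          if ε ≤ jump f s then xst f s t else 0) ∧
    (∀ t ∈ Icc (0:ℝ) 1, Jop (fun u => f u - Jop f u + Jeps f ε u) t = Jeps f ε t) := by
  have hgf : (fun u => f u - Jop f u + Jeps f ε u) = fun u => f u - St11.Hf f ε u :=
    funext (St11.geq hf)
  refine ⟨?_, ?_, ?_⟩
  · rw [show (fun t => f t - Jop f t + Jeps f ε t) = fun u => f u - St11.Hf f ε u from hgf]
    exact St11.hgex' hf hε
  · intro s hs t ht
    rw [hgf]
    exact St11.part2' hf hε hs ht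
  · intro t ht
    rw [hgf]
    exact St11.part3' hf hε ht
end
end
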